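/- arXiv:1307.2007 — 4 statements merged into one kernel-verified Lean document; each statement's English description precedes it below -/
import Mathlib

section
/- Let G be a connected graph with at least three vertices. If G has two adjacent vertices each of minimum degree δ(G), then κ₃(G) ≤ δ(G) − 1. -/
open SimpleGraph

/-- An `S`-Steiner tree in `G`: a subgraph that is a tree and contains `S`. -/
def IsSteinerTree {V : Type*} (G : SimpleGraph V) (S : Set V) (T : G.Subgraph) : Prop :=
  T.coe.IsTree ∧ S ⊆ T.verts

/-- Two `S`-trees are internally disjoint: edge-disjoint and meeting exactly in `S`. -/
def IntDisjoint {V : Type*} (S : Set V) {G : SimpleGraph V} (T₁ T₂ : G.Subgraph) : Prop :=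
  T₁.verts ∩ T₂.verts = S ∧ ∀ u v, ¬ (T₁.Adj u v ∧ T₂.Adj u v)

/-- `κ(S)`: the maximum number of pairwise internally disjoint `S`-Steiner trees. -/
noncomputable def steinerConn {V : Type*} (G : SimpleGraph V) (S : Set V) : ℕ :=
  sSup {n | ∃ f : Fin n → G.Subgraph,
    (∀ i, IsSteinerTree G S (f i)) ∧ ∀ i j, i ≠ j → IntDisjoint S (f i) (f j)}

/-- The generalized `k`-connectivity `κ_k(G)`. -/
noncomputable def genConn {V : Type*} (G : SimpleGraph V) (k : ℕ) : ℕ :=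
  sInf {c | ∃ S : Set V, S.ncard = k ∧ steinerConn G S = c}

/-- `G` is `k`-connected: more than `k` vertices, and removing fewer than `k`
vertices leaves it connected. -/
def KConnected {V : Type*} (G : SimpleGraph V) (k : ℕ) : Prop :=
  k < Nat.card V ∧ ∀ s : Set V, s.Finite → s.ncard < k → (G.induce sᶜ).Connected

/-- The vertex connectivity `κ(G)`. -/
noncomputable def vconn {V : Type*} (G : SimpleGraph V) : ℕ :=
  sSup {k | KConnected G k}

/-- The lexicographic product `G ∘ H`. -/
def lexProd {V W : Type*} (G : SimpleGraph V) (H : SimpleGraph W) : SimpleGraph (V × W) where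
  Adj a b := G.Adj a.1 b.1 ∨ (a.1 = b.1 ∧ H.Adj a.2 b.2)
  symm := by
    constructor
    intro a b h
    rcases h with h | ⟨h1, h2⟩
    · exact Or.inl h.symm
    · exact Or.inr ⟨h1.symm, h2.symm⟩
  loopless := by
    constructor
    intro a h
    rcases h with h | ⟨_, h2⟩
    · exact G.loopless.irrefl _ h
    · exact H.loopless.irrefl _ h2

/-- The star `K_{1,m}` on `m + 1` vertices: center `none`, leaves `some i`. -/
def starGraph (m : ℕ) : SimpleGraph (Option (Fin m)) where
  Adj u v := u ≠ v ∧ (u = none ∨ v = none)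
  symm := by constructor; intro u v ⟨h1, h2⟩; exact ⟨h1.symm, h2.symm⟩
  loopless := by constructor; intro u ⟨h1, _⟩; exact h1 rfl


lemma aux_exists_adj {V : Type*} {G : SimpleGraph V} {T : G.Subgraph} (hT : T.coe.Connected)
    {u w : V} (hu : u ∈ T.verts) (hw : w ∈ T.verts) (huw : u ≠ w) :
    ∃ x, T.Adj u x := by
  obtain ⟨p⟩ := hT.preconnected ⟨u, hu⟩ ⟨w, hw⟩
  cases p with
  | nil => exact absurd rfl huw
  | cons h _ => exact ⟨_, h⟩

lemma aux_walk_stuck {V : Type*} {G : SimpleGraph V} {T : G.Subgraph} {u v : V}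
    (hu : ∀ x, T.Adj u x → x = v) (hv : ∀ y, T.Adj v y → y = u) :
    ∀ {a c : T.verts} (_ : T.coe.Walk a c), (a.val = u ∨ a.val = v) → (c.val = u ∨ c.val = v) := by
  intro a c p
  induction p with
  | nil => exact id
  | cons h p ih =>
    intro ha
    apply ih
    rcases ha with ha | ha
    · right; exact hu _ (ha ▸ h)
    · left; exact hv _ (ha ▸ h)

lemma aux_card_bound {V : Type*} [Fintype V] (G : SimpleGraph V) [DecidableRel G.Adj]
    {a b : V} (hab : G.Adj a b) {n : ℕ} (f : Fin n → G.Subgraph)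
    (hdisj : ∀ i j, i ≠ j → ∀ x y, ¬ ((f i).Adj x y ∧ (f j).Adj x y))
    (hx : ∀ i, ∃ x, x ≠ b ∧ (f i).Adj a x) :
    n ≤ G.degree a - 1 := by
  classical
  set s : Finset V := (G.neighborFinset a).erase b with hs
  have hbmem : b ∈ G.neighborFinset a := (G.mem_neighborFinset a b).mpr hab
  have hcard : s.card = G.degree a - 1 := by
    rw [hs, Finset.card_erase_of_mem hbmem]; rfl
  choose g hg1 hg2 using hx
  have hmem : ∀ i, g i ∈ s := by
    intro i
    exact Finset.mem_erase.mpr ⟨hg1 i, (G.mem_neighborFinset a _).mpr ((f i).adj_sub (hg2 i))⟩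
  have hinj : Function.Injective (fun i => (⟨g i, hmem i⟩ : s)) := by
    intro i j hij
    by_contra hne
    have : g i = g j := congrArg Subtype.val hij
    exact hdisj i j hne a (g i) ⟨hg2 i, this ▸ hg2 j⟩
  have := Fintype.card_le_of_injective _ hinj
  simpa [hcard] using this


/-- If a connected graph on at least three vertices has two adjacent vertices of
minimum degree, then `κ₃(G) ≤ δ(G) - 1`. -/
theorem genConn_three_le_minDegree_sub_one {V : Type*} [Fintype V] (G : SimpleGraph V)
    [DecidableRel G.Adj] (hG : G.Connected) (hV : 3 ≤ Fintype.card V)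
    (h : ∃ u v : V, G.Adj u v ∧ G.degree u = G.minDegree ∧ G.degree v = G.minDegree) :
    genConn G 3 ≤ G.minDegree - 1 := by
  classical
  obtain ⟨u, v, hadj, hdu, hdv⟩ := h
  -- find a third vertex
  have hw : ∃ w : V, w ≠ u ∧ w ≠ v := by
    by_contra hc
    push_neg at hc
    have hsub : (Finset.univ : Finset V) ⊆ {u, v} := by
      intro x _
      rcases eq_or_ne x u with h | h
      · simp [h]
      · simp [hc x h]
    have h1 := Finset.card_le_card hsub
    have h2 : ({u, v} : Finset V).card ≤ 2 :=
      (Finset.card_insert_le _ _).trans (by simp)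
    have h3 : (Finset.univ : Finset V).card = Fintype.card V := Finset.card_univ
    omega
  obtain ⟨w, hwu, hwv⟩ := hw
  set S : Set V := {u, v, w} with hS
  have hncard : S.ncard = 3 :=
    Set.ncard_eq_three.mpr ⟨u, v, w, hadj.ne, Ne.symm hwu, Ne.symm hwv, rfl⟩
  have hbound : steinerConn G S ≤ G.minDegree - 1 := by
    apply csSup_le'
    rintro n ⟨f, htree, hdisj⟩
    have hedisj : ∀ i j, i ≠ j → ∀ x y, ¬ ((f i).Adj x y ∧ (f j).Adj x y) :=
      fun i j hij => (hdisj i j hij).2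
    have huV : ∀ i, u ∈ (f i).verts := fun i => (htree i).2 (by simp [hS])
    have hvV : ∀ i, v ∈ (f i).verts := fun i => (htree i).2 (by simp [hS])
    have hwV : ∀ i, w ∈ (f i).verts := fun i => (htree i).2 (by simp [hS])
    have hconn : ∀ i, (f i).coe.Connected := fun i => (htree i).1.isConnected
    -- dichotomy per tree
    have hdich : ∀ i, (∃ x, x ≠ v ∧ (f i).Adj u x) ∨ (∃ y, y ≠ u ∧ (f i).Adj v y) := by
      intro i
      by_contra hc
      push_neg at hc
      obtain ⟨h1, h2⟩ := hc
      have hu' : ∀ x, (f i).Adj u x → x = v := by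
        intro x hx; by_contra hne; exact h1 x hne hx
      have hv' : ∀ y, (f i).Adj v y → y = u := by
        intro y hy; by_contra hne; exact h2 y hne hy
      obtain ⟨p⟩ := (hconn i).preconnected ⟨u, huV i⟩ ⟨w, hwV i⟩
      have := aux_walk_stuck hu' hv' p (Or.inl rfl)
      simp only at this
      rcases this with h | h
      · exact hwu h
      · exact hwv h
    by_cases hcase : ∀ i, ∃ x, x ≠ v ∧ (f i).Adj u x
    · have := aux_card_bound G hadj f hedisj hcase
      rwa [hdu] at this
    · push_neg at hcase
      obtain ⟨i0, hi0⟩ := hcase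
      have hi0' : ∀ x, (f i0).Adj u x → x = v := by
        intro x hx; by_contra hne; exact hi0 x hne hx
      have hi0uv : (f i0).Adj u v := by
        obtain ⟨x, hx⟩ := aux_exists_adj (hconn i0) (huV i0) (hwV i0) (Ne.symm hwu)
        exact (hi0' x hx) ▸ hx
      have hall : ∀ i, ∃ y, y ≠ u ∧ (f i).Adj v y := by
        intro i
        rcases eq_or_ne i i0 with rfl | hne
        · rcases hdich i with ⟨x, hx1, hx2⟩ | hy
          · exact absurd (hi0' x hx2) hx1
          · exact hy
        · by_contra hc
          push_neg at hc
          obtain ⟨y, hy⟩ := aux_exists_adj (hconn i) (hvV i) (hwV i) (Ne.symm hwv)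
          rcases eq_or_ne y u with heq | hyu
          · exact hedisj i i0 hne v u ⟨heq ▸ hy, hi0uv.symm⟩
          · exact hc y hyu hy
      have := aux_card_bound G hadj.symm f hedisj hall
      rwa [hdv] at this
  calc genConn G 3 ≤ steinerConn G S := Nat.sInf_le ⟨S, hncard, rfl⟩
    _ ≤ G.minDegree - 1 := hbound
end

section
/- For any two connected graphs G and H, κ(G □ H) ≥ κ(G) + κ(H), where G □ H is the Cartesian product. -/
open SimpleGraph

section SabidussiAux

lemma arith' (a b t₁ t₂ t₃ n α β : ℕ) (ha : 1 ≤ a)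
    (h2 : t₂ + 1 ≤ b) (h3 : t₁ + t₂ + t₃ = n) (h4 : b + 1 ≤ n)
    (h5 : 1 ≤ α) (h6 : 1 ≤ β) (h7 : a + 1 ≤ α + β) (hle : t₁ ≤ t₂) :
    a + b ≤ t₁ * α + t₂ * β + t₃ * a := by
  obtain ⟨d, rfl⟩ := Nat.le.dest hle
  rcases Nat.eq_zero_or_pos (t₁ + t₃) with h0 | h0
  · omega
  · nlinarith [Nat.mul_le_mul_left t₁ h7, Nat.mul_le_mul_left d h6,
      Nat.mul_le_mul_left (t₁ + t₃) ha]

lemma arith (a b t₁ t₂ t₃ n α β : ℕ) (ha : 1 ≤ a)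
    (h1 : t₁ + 1 ≤ b) (h2 : t₂ + 1 ≤ b) (h3 : t₁ + t₂ + t₃ = n) (h4 : b + 1 ≤ n)
    (h5 : 1 ≤ α) (h6 : 1 ≤ β) (h7 : a + 1 ≤ α + β) :
    a + b ≤ t₁ * α + t₂ * β + t₃ * a := by
  rcases le_total t₁ t₂ with h | h
  · exact arith' a b t₁ t₂ t₃ n α β ha h2 h3 h4 h5 h6 h7 h
  · have := arith' a b t₂ t₁ t₃ n β α ha h1 (by omega) h4 h6 h5 (by omega) h
    omega

variable {V W : Type*}

lemma kconn_neighbor [Fintype V] {G : SimpleGraph V} {a : ℕ} (h : KConnected G a) (u : V) :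
    a ≤ (G.neighborSet u).ncard := by
  by_contra hlt
  push_neg at hlt
  have hconn := h.2 (G.neighborSet u) (Set.toFinite _) hlt
  have hcard : (insert u (G.neighborSet u)).ncard < Nat.card V := by
    have h2 := Set.ncard_insert_le u (G.neighborSet u)
    have h3 := h.1; omega
  have hne : insert u (G.neighborSet u) ≠ Set.univ := by
    intro he; rw [he, Set.ncard_univ] at hcard; omega
  obtain ⟨v, hv⟩ := Set.ne_univ_iff_exists_notMem _ |>.mp hne
  have hvne : v ≠ u := fun he => hv (by simp [he])
  have hvN : v ∈ (G.neighborSet u)ᶜ := fun hm => hv (by simp [hm])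
  have huN : u ∈ (G.neighborSet u)ᶜ := by simp
  obtain ⟨w⟩ := hconn.preconnected ⟨u, huN⟩ ⟨v, hvN⟩
  cases w with
  | nil => exact hvne rfl
  | cons hadj p =>
    rename_i z
    have : G.Adj u z.1 := by simpa using hadj
    exact z.2 this

lemma reach_col [Fintype V] [Fintype W] {G : SimpleGraph V} {H : SimpleGraph W} {S : Set (V × W)} {b : ℕ}
    (hHb : KConnected H b) (c : V) (hc : {w | (c, w) ∈ S}.ncard < b)
    (p q : W) (hp : (c, p) ∈ Sᶜ) (hq : (c, q) ∈ Sᶜ) :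
    ((G □ H).induce Sᶜ).Reachable ⟨(c, p), hp⟩ ⟨(c, q), hq⟩ := by
  have hconn := hHb.2 {w | (c, w) ∈ S} (Set.toFinite _) hc
  let f : H.induce {w | (c, w) ∈ S}ᶜ →g (G □ H).induce Sᶜ :=
    { toFun := fun z => ⟨(c, z.1), z.2⟩
      map_rel' := fun hadj => by
        simp only [comap_adj, Function.Embedding.coe_subtype] at hadj ⊢
        exact SimpleGraph.boxProd_adj.mpr (Or.inr ⟨hadj, rfl⟩) }
  exact (hconn.preconnected ⟨p, hp⟩ ⟨q, hq⟩).map f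

lemma reach_row [Fintype V] [Fintype W] {G : SimpleGraph V} {H : SimpleGraph W} {S : Set (V × W)} {a : ℕ}
    (hGa : KConnected G a) (r : W) (hr : {u | (u, r) ∈ S}.ncard < a)
    (p q : V) (hp : (p, r) ∈ Sᶜ) (hq : (q, r) ∈ Sᶜ) :
    ((G □ H).induce Sᶜ).Reachable ⟨(p, r), hp⟩ ⟨(q, r), hq⟩ := by
  have hconn := hGa.2 {u | (u, r) ∈ S} (Set.toFinite _) hr
  let f : G.induce {u | (u, r) ∈ S}ᶜ →g (G □ H).induce Sᶜ :=
    { toFun := fun z => ⟨(z.1, r), z.2⟩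
      map_rel' := fun hadj => by
        simp only [comap_adj, Function.Embedding.coe_subtype] at hadj ⊢
        exact SimpleGraph.boxProd_adj.mpr (Or.inl ⟨hadj, rfl⟩) }
  exact (hconn.preconnected ⟨p, hp⟩ ⟨q, hq⟩).map f

lemma case1 [Fintype V] [Fintype W] {G : SimpleGraph V} {H : SimpleGraph W} {a b : ℕ}
    (hGc : G.Connected) (hGa : KConnected G a) (hHb : KConnected H b)
    {S : Set (V × W)} (hS : S.ncard < a + b)
    (hcol : ∀ c : V, {w | (c, w) ∈ S}.ncard < b) :
    ((G □ H).induce Sᶜ).Preconnected := by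
  classical
  intro x y
  by_contra hxy
  set P := (G □ H).induce Sᶜ with hPdef
  set R : W → Set V := fun w => {u | (u, w) ∈ S} with hRdef
  -- reachability within a column
  have colReach : ∀ p q : ↥Sᶜ, (p : V × W).1 = (q : V × W).1 → P.Reachable p q := by
    rintro ⟨⟨c, w⟩, hp⟩ ⟨⟨c', w'⟩, hq⟩ h
    dsimp at h
    subst h
    exact reach_col hHb c (hcol c) w w' hp hq
  set A : Set V := {u : V | ∃ p : ↥Sᶜ, (p : V × W).1 = u ∧ P.Reachable p x} with hAdef
  have hxA : (x : V × W).1 ∈ A := ⟨x, rfl, Reachable.refl x⟩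
  have hyA : (y : V × W).1 ∉ A := by
    rintro ⟨p, hp1, hpx⟩
    exact hxy (((colReach y p hp1.symm).trans hpx).symm)
  have cross : ∀ (u u' : V) (w : W), u ∈ A → G.Adj u u' →
      (u, w) ∈ Sᶜ → (u', w) ∈ Sᶜ → u' ∈ A := by
    rintro u u' w ⟨p, hp1, hpx⟩ hadj hu hu'
    refine ⟨⟨(u', w), hu'⟩, rfl, ?_⟩
    have hstep : P.Adj ⟨(u', w), hu'⟩ ⟨(u, w), hu⟩ := by
      simp only [hPdef, comap_adj, Function.Embedding.coe_subtype]
      exact SimpleGraph.boxProd_adj.mpr (Or.inl ⟨hadj.symm, rfl⟩)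
    exact (hstep.reachable).trans ((colReach ⟨(u, w), hu⟩ p hp1.symm).trans hpx)
  -- per-row cost
  have rowKey : ∀ w : W, A ⊆ R w ∨ Aᶜ ⊆ R w ∨ max a 1 ≤ (R w).ncard := by
    intro w
    by_contra hcon
    push_neg at hcon
    obtain ⟨h1, h2, h3⟩ := hcon
    obtain ⟨p, hpA, hpR⟩ := Set.not_subset.mp h1
    obtain ⟨q, hqA, hqR⟩ := Set.not_subset.mp h2
    have hconnR : (G.induce (R w)ᶜ).Connected := by
      rcases lt_or_ge (R w).ncard a with hlt | hge
      · exact hGa.2 (R w) (Set.toFinite _) hlt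
      · have hR0 : (R w).ncard = 0 := by omega
        have hRe : R w = ∅ := (Set.ncard_eq_zero (Set.toFinite _)).mp hR0
        rw [hRe, Set.compl_empty]
        exact (induceUnivIso G).connected_iff.mpr hGc
    obtain ⟨wk⟩ := hconnR.preconnected ⟨p, hpR⟩ ⟨q, hqR⟩
    obtain ⟨d, _, hd1, hd2⟩ := wk.exists_boundary_dart {z : ↥(R w)ᶜ | (z : V) ∈ A} hpA hqA
    have hadj : G.Adj (d.fst : V) (d.snd : V) := by
      have := d.adj
      simpa using this
    exact hd2 (cross _ _ w hd1 hadj d.fst.2 d.snd.2)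
  -- counting
  set F : W → Finset V := fun w => (Set.toFinite (R w)).toFinset with hFdef
  have hcardF : ∀ w, (F w).card = (R w).ncard := by
    intro w; rw [Set.ncard_eq_toFinset_card]
  have hsum : ∑ w : W, (F w).card = S.ncard := by
    rw [Set.ncard_eq_toFinset_card']
    rw [Finset.card_eq_sum_card_fiberwise (f := Prod.snd) (t := Finset.univ)
      (fun x _ => Finset.mem_univ _)]
    refine Finset.sum_congr rfl fun w _ => ?_
    refine (Finset.card_bij (fun z _ => z.1) ?_ ?_ ?_).symm
    · rintro ⟨u, w'⟩ hz
      simp only [Finset.mem_filter, Set.mem_toFinset] at hz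
      obtain ⟨hz1, hz2⟩ := hz
      cases hz2
      simp only [hFdef, Set.Finite.mem_toFinset]
      exact hz1
    · rintro ⟨u, w'⟩ hz ⟨u', w''⟩ hz' h
      simp only [Finset.mem_filter, Set.mem_toFinset] at hz hz'
      cases hz.2; cases hz'.2; cases h; rfl
    · intro u hu
      simp only [hFdef, Set.Finite.mem_toFinset] at hu
      exact ⟨(u, w), by simp [Set.mem_toFinset]; exact hu, rfl⟩
  set a' := max a 1 with ha'
  set g : W → ℕ := fun w =>
    if A ⊆ R w then A.ncard else if Aᶜ ⊆ R w then Aᶜ.ncard else a' with hg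
  have hglb : ∀ w : W, g w ≤ (F w).card := by
    intro w
    rw [hcardF w]
    by_cases h1 : A ⊆ R w
    · simp only [hg, if_pos h1]
      exact Set.ncard_le_ncard h1 (Set.toFinite _)
    · by_cases h2 : Aᶜ ⊆ R w
      · simp only [hg, if_neg h1, if_pos h2]
        exact Set.ncard_le_ncard h2 (Set.toFinite _)
      · simp only [hg, if_neg h1, if_neg h2]
        rcases rowKey w with h | h | h
        · exact absurd h h1
        · exact absurd h h2
        · exact h
  have hsum_g : ∑ w : W, g w ≤ S.ncard := by
    rw [← hsum]; exact Finset.sum_le_sum fun w _ => hglb w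
  -- partition counts
  set W₁ := Finset.univ.filter (fun w => A ⊆ R w) with hW₁
  set W₂ := (Finset.univ.filter (fun w => ¬ A ⊆ R w)).filter (fun w => Aᶜ ⊆ R w) with hW₂
  set W₃ := (Finset.univ.filter (fun w => ¬ A ⊆ R w)).filter (fun w => ¬ Aᶜ ⊆ R w) with hW₃
  have hpart : W₁.card + (W₂.card + W₃.card) = Fintype.card W := by
    rw [hW₂, hW₃, Finset.card_filter_add_card_filter_not,
      hW₁, Finset.card_filter_add_card_filter_not, Finset.card_univ]
  have e1 : ∀ w ∈ W₁, g w = A.ncard := by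
    intro w hw
    simp only [hW₁, Finset.mem_filter] at hw
    simp only [hg]
    rw [if_pos hw.2]
  have e2 : ∀ w ∈ W₂, g w = Aᶜ.ncard := by
    intro w hw
    simp only [hW₂, Finset.mem_filter] at hw
    simp only [hg]
    rw [if_neg hw.1.2, if_pos hw.2]
  have e3 : ∀ w ∈ W₃, g w = a' := by
    intro w hw
    simp only [hW₃, Finset.mem_filter] at hw
    simp only [hg]
    rw [if_neg hw.1.2, if_neg hw.2]
  have hgsum : ∑ w : W, g w =
      W₁.card * A.ncard + (W₂.card * Aᶜ.ncard + W₃.card * a') := by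
    rw [← Finset.sum_filter_add_sum_filter_not Finset.univ (fun w => A ⊆ R w) g]
    rw [← Finset.sum_filter_add_sum_filter_not
        (Finset.univ.filter (fun w => ¬ A ⊆ R w)) (fun w => Aᶜ ⊆ R w) g]
    rw [Finset.sum_congr rfl e1, Finset.sum_congr rfl e2, Finset.sum_congr rfl e3]
    simp [mul_comm]
  -- bounds on the partition sizes
  have ht₁ : W₁.card + 1 ≤ b := by
    have hsub : W₁ ⊆ (Set.toFinite {w | ((x : V × W).1, w) ∈ S}).toFinset := by
      intro w hw
      simp only [hW₁, Finset.mem_filter] at hw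
      simp only [Set.Finite.mem_toFinset]
      exact hw.2 hxA
    have h1 := Finset.card_le_card hsub
    have h2 := hcol (x : V × W).1
    rw [Set.ncard_eq_toFinset_card] at h2
    omega
  have hyAc : (y : V × W).1 ∈ Aᶜ := hyA
  have ht₂ : W₂.card + 1 ≤ b := by
    have hsub : W₂ ⊆ (Set.toFinite {w | ((y : V × W).1, w) ∈ S}).toFinset := by
      intro w hw
      simp only [hW₂, Finset.mem_filter] at hw
      simp only [Set.Finite.mem_toFinset]
      exact hw.2 hyAc
    have h1 := Finset.card_le_card hsub
    have h2 := hcol (y : V × W).1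
    rw [Set.ncard_eq_toFinset_card] at h2
    omega
  have hn : b + 1 ≤ Fintype.card W := by
    have := hHb.1; rw [Nat.card_eq_fintype_card] at this; omega
  have hα : 1 ≤ A.ncard := by
    have := (Set.ncard_pos (Set.toFinite A)).mpr ⟨_, hxA⟩; omega
  have hβ : 1 ≤ Aᶜ.ncard := by
    have := (Set.ncard_pos (Set.toFinite Aᶜ)).mpr ⟨_, hyAc⟩; omega
  have hαβ : a' + 1 ≤ A.ncard + Aᶜ.ncard := by
    have h1 := Set.ncard_add_ncard_compl A
    have h2 := hGa.1
    omega
  have hfinal := arith a' b W₁.card W₂.card W₃.card (Fintype.card W) A.ncard Aᶜ.ncard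
    (le_max_right a 1) ht₁ ht₂ (by omega) hn hα hβ hαβ
  omega


lemma crossCase [Fintype V] [Fintype W] {G : SimpleGraph V} {H : SimpleGraph W} {a b : ℕ}
    (hGa : KConnected G a) (hHb : KConnected H b)
    {S : Set (V × W)} (hS : S.ncard < a + b)
    (c₀ : V) (hc₀ : b ≤ {w | (c₀, w) ∈ S}.ncard)
    (r₀ : W) (hr₀ : a ≤ {u | (u, r₀) ∈ S}.ncard) :
    ((G □ H).induce Sᶜ).Preconnected := by
  classical
  set col : Set W := {w | (c₀, w) ∈ S} with hcoldef
  set row : Set V := {u | (u, r₀) ∈ S} with hrowdef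
  set Scol : Set (V × W) := (fun w => (c₀, w)) '' col with hScoldef
  set Srow : Set (V × W) := (fun u => (u, r₀)) '' row with hSrowdef
  have hScol_sub : Scol ⊆ S := by rintro z ⟨w, hw, rfl⟩; exact hw
  have hSrow_sub : Srow ⊆ S := by rintro z ⟨u, hu, rfl⟩; exact hu
  have hncol : Scol.ncard = col.ncard :=
    Set.ncard_image_of_injective _ (fun w w' h => congrArg Prod.snd h)
  have hnrow : Srow.ncard = row.ncard :=
    Set.ncard_image_of_injective _ (fun u u' h => congrArg Prod.fst h)
  have hmem : (c₀, r₀) ∈ S := by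
    by_contra hmem
    have hdisj : Disjoint Scol Srow := by
      rw [Set.disjoint_left]
      rintro z ⟨w, hw, rfl⟩ ⟨u, hu, hz⟩
      have : w = r₀ := congrArg Prod.snd hz.symm
      exact hmem (this ▸ hw)
    have hun : (Scol ∪ Srow).ncard = Scol.ncard + Srow.ncard :=
      Set.ncard_union_eq hdisj (Set.toFinite _) (Set.toFinite _)
    have hle : (Scol ∪ Srow).ncard ≤ S.ncard :=
      Set.ncard_le_ncard (Set.union_subset hScol_sub hSrow_sub) (Set.toFinite _)
    omega
  have hunion : (Scol ∪ Srow).ncard + (Scol ∩ Srow).ncard = Scol.ncard + Srow.ncard :=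
    Set.ncard_union_add_ncard_inter _ _ (Set.toFinite _) (Set.toFinite _)
  have hint : (Scol ∩ Srow).ncard ≤ 1 := by
    have hsub : Scol ∩ Srow ⊆ {(c₀, r₀)} := by
      rintro z ⟨⟨w, hw, rfl⟩, ⟨u, hu, hz⟩⟩
      have : w = r₀ := congrArg Prod.snd hz.symm
      simp [this]
    simpa using Set.ncard_le_ncard hsub (Set.toFinite _)
  have hle : (Scol ∪ Srow).ncard ≤ S.ncard :=
    Set.ncard_le_ncard (Set.union_subset hScol_sub hSrow_sub) (Set.toFinite _)
  have h2 : ∀ z ∈ S, z.1 = c₀ ∨ z.2 = r₀ := by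
    by_contra hcon
    push_neg at hcon
    obtain ⟨z, hz, hz1, hz2⟩ := hcon
    have hznot : z ∉ Scol ∪ Srow := by
      rintro (⟨w, hw, hzz⟩ | ⟨u, hu, hzz⟩)
      · exact hz1 (congrArg Prod.fst hzz.symm)
      · exact hz2 (congrArg Prod.snd hzz.symm)
    have hins : insert z (Scol ∪ Srow) ⊆ S := by
      rw [Set.insert_subset_iff]
      exact ⟨hz, Set.union_subset hScol_sub hSrow_sub⟩
    have hinscard : (insert z (Scol ∪ Srow)).ncard = (Scol ∪ Srow).ncard + 1 :=
      Set.ncard_insert_of_notMem hznot (Set.toFinite _)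
    have hle2 : (insert z (Scol ∪ Srow)).ncard ≤ S.ncard :=
      Set.ncard_le_ncard hins (Set.toFinite _)
    omega
  have hrow_eq : row.ncard = a := by omega
  have hcol_eq : col.ncard = b := by omega
  have hb1 : 1 ≤ b := by
    have : r₀ ∈ col := hmem
    have := (Set.ncard_pos (Set.toFinite col)).mpr ⟨r₀, this⟩
    omega
  have ha1 : 1 ≤ a := by
    have : c₀ ∈ row := hmem
    have := (Set.ncard_pos (Set.toFinite row)).mpr ⟨c₀, this⟩
    omega
  have hcolne : col ≠ Set.univ := by
    intro he
    have := hHb.1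
    rw [he, Set.ncard_univ] at hcol_eq
    omega
  obtain ⟨r₁, hr₁⟩ := Set.ne_univ_iff_exists_notMem _ |>.mp hcolne
  have hr₁r₀ : r₁ ≠ r₀ := fun h => hr₁ (h ▸ hmem)
  have hclean : ∀ u : V, (u, r₁) ∈ Sᶜ := by
    intro u hu
    rcases h2 _ hu with h | h
    · have h' : u = c₀ := h
      subst h'
      exact hr₁ hu
    · have h' : r₁ = r₀ := h
      exact hr₁r₀ h' 
  have claim1 : ∀ u : V, u ∉ row → ∀ (v : W) (hv : (u, v) ∈ Sᶜ),
      ((G □ H).induce Sᶜ).Reachable ⟨(u, v), hv⟩ ⟨(u, r₁), hclean u⟩ := by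
    intro u hu v hv
    have hcleancol : {w | (u, w) ∈ S} = ∅ := by
      ext w
      simp only [Set.mem_setOf_eq, Set.mem_empty_iff_false, iff_false]
      intro hw
      rcases h2 _ hw with h | h
      · have h' : u = c₀ := h
        subst h'
        exact hu hmem
      · have h' : w = r₀ := h
        subst h'
        exact hu hw
    refine reach_col hHb u ?_ v r₁ hv (hclean u)
    rw [hcleancol, Set.ncard_empty]
    omega
  have claim2 : ∀ z : ↥Sᶜ, ∃ u : V,
      ((G □ H).induce Sᶜ).Reachable z ⟨(u, r₁), hclean u⟩ := by
    rintro ⟨⟨u, v⟩, hz⟩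
    by_cases hu : u ∈ row
    · have hvr : v ≠ r₀ := by
        rintro rfl
        exact hz hu
      have hnsub : ¬ (G.neighborSet u ⊆ row) := by
        intro hsub
        have hsub2 : G.neighborSet u ⊆ row \ {u} := by
          intro p hp
          refine ⟨hsub hp, ?_⟩
          rintro rfl
          exact G.irrefl hp
        have hc1 := Set.ncard_le_ncard hsub2 (Set.toFinite _)
        have hc2 : (row \ {u}).ncard = row.ncard - 1 :=
          Set.ncard_diff_singleton_of_mem hu
        have hc3 := kconn_neighbor hGa u
        omega
      obtain ⟨p, hpN, hpRow⟩ := Set.not_subset.mp hnsub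
      have hpv : (p, v) ∈ Sᶜ := by
        intro hpS
        rcases h2 _ hpS with h | h
        · have h' : p = c₀ := h
          subst h'
          exact hpRow hmem
        · have h' : v = r₀ := h
          exact hvr h' 
      have hstep : ((G □ H).induce Sᶜ).Adj ⟨(u, v), hz⟩ ⟨(p, v), hpv⟩ := by
        simp only [comap_adj, Function.Embedding.coe_subtype]
        exact SimpleGraph.boxProd_adj.mpr (Or.inl ⟨hpN, rfl⟩)
      exact ⟨p, hstep.reachable.trans (claim1 p hpRow v hpv)⟩
    · exact ⟨u, claim1 u hu v hz⟩
  intro x y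
  obtain ⟨u1, hx1⟩ := claim2 x
  obtain ⟨u2, hy1⟩ := claim2 y
  have hrow1 : {u : V | (u, r₁) ∈ S}.ncard < a := by
    have : {u : V | (u, r₁) ∈ S} = ∅ := by
      ext u; simpa using hclean u
    rw [this, Set.ncard_empty]
    omega
  have hmid := reach_row (G := G) (H := H) hGa r₁ hrow1 u1 u2 (hclean u1) (hclean u2)
  exact hx1.trans (hmid.trans hy1.symm)

lemma swapPre [Fintype V] [Fintype W] {G : SimpleGraph V} {H : SimpleGraph W}
    {S : Set (V × W)}
    (h : ((H □ G).induce (Prod.swap ⁻¹' S)ᶜ).Preconnected) :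
    ((G □ H).induce Sᶜ).Preconnected := by
  have e : (H □ G).induce (Prod.swap ⁻¹' S)ᶜ ≃g (G □ H).induce Sᶜ := by
    refine ⟨⟨fun z => ⟨z.1.swap, z.2⟩, fun z => ⟨z.1.swap, by simp; exact z.2⟩,
      fun z => Subtype.ext (Prod.swap_swap _), fun z => Subtype.ext (Prod.swap_swap _)⟩, ?_⟩
    rintro ⟨⟨w₁, u₁⟩, h₁⟩ ⟨⟨w₂, u₂⟩, h₂⟩
    simp only [comap_adj, Function.Embedding.coe_subtype, Equiv.coe_fn_mk, Prod.swap_prod_mk,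
      SimpleGraph.boxProd_adj]
    tauto
  exact (SimpleGraph.Iso.preconnected_iff e).mp h

lemma kconn_vconn [Fintype V] {G : SimpleGraph V} (hG : G.Connected) :
    KConnected G (vconn G) := by
  have hne : {k | KConnected G k}.Nonempty := by
    refine ⟨0, ?_, ?_⟩
    · have : Nonempty V := hG.nonempty
      exact Nat.card_pos
    · intro s _ hs
      exact absurd hs (Nat.not_lt_zero _)
  have hbdd : BddAbove {k | KConnected G k} := ⟨Nat.card V, fun k hk => le_of_lt hk.1⟩
  exact Nat.sSup_mem hne hbdd

end SabidussiAux

/-- Sabidussi: `κ(G □ H) ≥ κ(G) + κ(H)` for connected graphs. -/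
theorem vconn_boxProd_ge {V W : Type*} [Fintype V] [Fintype W]
    (G : SimpleGraph V) (H : SimpleGraph W) (hG : G.Connected) (hH : H.Connected) :
    vconn G + vconn H ≤ vconn (G □ H) := by
  classical
  have hGa := kconn_vconn hG
  have hHb := kconn_vconn hH
  set a := vconn G with ha
  set b := vconn H with hb
  have hcardV : a + 1 ≤ Nat.card V := hGa.1
  have hcardW : b + 1 ≤ Nat.card W := hHb.1
  have hprod : Nat.card (V × W) = Nat.card V * Nat.card W := Nat.card_prod _ _
  have hmain : KConnected (G □ H) (a + b) := by
    constructor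
    · rw [hprod]
      nlinarith
    · intro s _ hcard
      have hpre : ((G □ H).induce sᶜ).Preconnected := by
        by_cases h1 : ∀ c : V, {w | (c, w) ∈ s}.ncard < b
        · exact case1 hG hGa hHb hcard h1
        · push_neg at h1
          obtain ⟨c₀, hc₀⟩ := h1
          by_cases h2 : ∀ r : W, {u | (u, r) ∈ s}.ncard < a
          · apply swapPre
            have hs' : (Prod.swap ⁻¹' s : Set (W × V)).ncard = s.ncard := by
              rw [← Set.image_swap_eq_preimage_swap]
              exact Set.ncard_image_of_injective _ Prod.swap_injective
            refine case1 hH hHb hGa ?_ ?_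
            · rw [hs']; omega
            · intro c
              exact h2 c
          · push_neg at h2
            obtain ⟨r₀, hr₀⟩ := h2
            exact crossCase hGa hHb hcard c₀ hc₀ r₀ hr₀
      have hne : Nonempty ↥sᶜ := by
        rw [Set.nonempty_coe_sort]
        by_contra hcon
        rw [Set.not_nonempty_iff_eq_empty, Set.compl_empty_iff] at hcon
        rw [hcon, Set.ncard_univ, hprod] at hcard
        nlinarith
      exact @SimpleGraph.Connected.mk _ _ hpre hne
  have hbdd : BddAbove {k | KConnected (G □ H) k} :=
    ⟨Nat.card (V × W), fun k hk => le_of_lt hk.1⟩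
  exact le_csSup hbdd hmain
end

section
/- Let G and H be two nontrivial connected graphs. Then κ(G □ H) = min{κ(G)·|V(H)|, κ(H)·|V(G)|, δ(G) + δ(H)}. -/
set_option linter.unusedSectionVars false
set_option linter.unreachableTactic false
set_option linter.unusedTactic false
set_option maxHeartbeats 1000000


open SimpleGraph

namespace SpacapanAux

variable {A : Type*} {K : SimpleGraph A} {S : Set A}

/-- connectivity outside `S` -/
def SW (K : SimpleGraph A) (S : Set A) (x y : A) : Prop :=
  ∃ p : K.Walk x y, ∀ z ∈ p.support, z ∉ S

lemma SW.refl {x : A} (hx : x ∉ S) : SW K S x x :=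
  ⟨Walk.nil, by simpa using hx⟩

lemma SW.symm {x y : A} (h : SW K S x y) : SW K S y x := by
  obtain ⟨p, hp⟩ := h
  exact ⟨p.reverse, by simpa [Walk.support_reverse] using hp⟩

lemma SW.trans {x y z : A} (h : SW K S x y) (h' : SW K S y z) : SW K S x z := by
  obtain ⟨p, hp⟩ := h; obtain ⟨q, hq⟩ := h'
  refine ⟨p.append q, ?_⟩
  intro w hw
  rcases (Walk.mem_support_append_iff _ _).1 hw with h | h
  · exact hp _ h
  · exact hq _ h

lemma SW.not_mem_left {x y : A} (h : SW K S x y) : x ∉ S := by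
  obtain ⟨p, hp⟩ := h; exact hp _ p.start_mem_support

lemma SW.not_mem_right {x y : A} (h : SW K S x y) : y ∉ S := by
  obtain ⟨p, hp⟩ := h; exact hp _ p.end_mem_support

lemma SW.adj {x y z : A} (h : SW K S x y) (ha : K.Adj y z) (hz : z ∉ S) :
    SW K S x z :=
  h.trans ⟨Walk.cons ha Walk.nil, by
    intro w hw
    simp only [Walk.support_cons, Walk.support_nil, List.mem_cons, List.mem_singleton] at hw
    rcases hw with rfl | hw
    · exact h.not_mem_right
    · rcases hw with rfl | h'
      · exact hz
      · simp at h'⟩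

lemma sw_of_induce_reachable {x y : ↥Sᶜ} (h : (K.induce Sᶜ).Reachable x y) :
    SW K S x.1 y.1 := by
  obtain ⟨p⟩ := h
  refine ⟨p.map ⟨Subtype.val, fun h => h⟩, ?_⟩
  intro z hz
  rw [Walk.support_map, List.mem_map] at hz
  obtain ⟨w, _, rfl⟩ := hz
  exact w.2

lemma induce_reachable_of_sw : ∀ {x y : A} (p : K.Walk x y)
    (hp : ∀ z ∈ p.support, z ∉ S),
    (K.induce Sᶜ).Reachable ⟨x, hp _ p.start_mem_support⟩ ⟨y, hp _ p.end_mem_support⟩ := by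
  intro x y p
  induction p with
  | nil => intro _; rfl
  | cons h p ih =>
      intro hp
      have h1 : ∀ z ∈ p.support, z ∉ S := fun z hz => hp z (by simp [hz])
      refine Reachable.trans ?_ (ih h1)
      exact Adj.reachable (by exact h)

lemma not_sw_of_not_connected (hne : Sᶜ.Nonempty)
    (h : ¬ (K.induce Sᶜ).Connected) :
    ∃ x y : A, x ∉ S ∧ y ∉ S ∧ ¬ SW K S x y := by
  have hne' : Nonempty ↥Sᶜ := hne.to_subtype
  have hpre : ¬ (K.induce Sᶜ).Preconnected := fun hp => h (connected_iff _ |>.2 ⟨hp, hne'⟩)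
  simp only [SimpleGraph.Preconnected, not_forall] at hpre
  obtain ⟨x, y, hxy⟩ := hpre
  exact ⟨x.1, y.1, x.2, y.2, fun hsw => hxy (by
    have := induce_reachable_of_sw hsw.choose hsw.choose_spec
    simpa using this)⟩

end SpacapanAux

namespace SpacapanAux

variable {A : Type*} {K : SimpleGraph A} {S : Set A}

lemma kconn_mono {j k : ℕ} (hjk : j ≤ k) (h : KConnected K k) : KConnected K j :=
  ⟨lt_of_le_of_lt hjk h.1, fun s hs hcard => h.2 s hs (lt_of_lt_of_le hcard hjk)⟩

lemma kconn_zero [Finite A] [Nonempty A] : KConnected K 0 :=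
  ⟨Nat.card_pos, fun _ _ h => absurd h (by simp)⟩

lemma vconn_bddAbove : BddAbove {k | KConnected K k} :=
  ⟨Nat.card A, fun _ hk => le_of_lt hk.1⟩

lemma kconn_vconn [Finite A] [Nonempty A] : KConnected K (vconn K) :=
  Nat.sSup_mem ⟨0, by exact (kconn_zero : KConnected K 0)⟩ vconn_bddAbove

lemma le_vconn {k : ℕ} (h : KConnected K k) : k ≤ vconn K :=
  le_csSup vconn_bddAbove h

lemma vconn_lt_card [Finite A] [Nonempty A] : vconn K < Nat.card A :=
  (kconn_vconn (K := K)).1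

/-- a separating set has size at least the connectivity -/
lemma vconn_le_of_sep [Finite A] [Nonempty A] {T : Set A} (hT : T.Finite) {x y : A}
    (hx : x ∉ T) (hy : y ∉ T) (hsep : ¬ SW K T x y) : vconn K ≤ T.ncard := by
  by_contra hlt
  push_neg at hlt
  have := (kconn_vconn (K := K)).2 T hT hlt
  have hr : (K.induce Tᶜ).Reachable ⟨x, hx⟩ ⟨y, hy⟩ := this.preconnected _ _
  exact hsep (sw_of_induce_reachable hr)

end SpacapanAux

namespace SpacapanAux

variable {A : Type*} {K : SimpleGraph A}

section Fin
variable [Fintype A] [DecidableRel K.Adj]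

lemma one_le_minDegree (hK : K.Connected) (h2 : 2 ≤ Fintype.card A) :
    1 ≤ K.minDegree := by
  have : Nonempty A := Fintype.card_pos_iff.1 (by omega)
  obtain ⟨v, hv⟩ := K.exists_minimal_degree_vertex
  obtain ⟨w, hw⟩ := Fintype.exists_ne_of_one_lt_card (by omega) v
  obtain ⟨p⟩ := hK.preconnected v w
  rw [hv]
  cases p with
  | nil => exact absurd rfl hw.symm
  | cons h _ => exact K.degree_pos_iff_exists_adj v |>.2 ⟨_, h⟩

omit [DecidableRel K.Adj] in
lemma one_le_vconn (hK : K.Connected) (h2 : 2 ≤ Fintype.card A) :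
    1 ≤ vconn K := by
  have : Nonempty A := Fintype.card_pos_iff.1 (by omega)
  refine le_vconn ⟨by rw [Nat.card_eq_fintype_card]; omega, fun s hs h0 => ?_⟩
  have hse : s = ∅ := (Set.ncard_eq_zero hs).1 (by omega)
  subst hse
  rw [Set.compl_empty]
  exact (K.induceUnivIso).connected_iff.2 hK

omit [DecidableRel K.Adj] in
lemma vconn_le_card_sub_one [Nonempty A] : vconn K ≤ Fintype.card A - 1 := by
  have := vconn_lt_card (K := K)
  rw [Nat.card_eq_fintype_card] at this
  omega

end Fin
end SpacapanAux

namespace SpacapanAux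

variable {V W : Type*} [Fintype V] [Fintype W] {G : SimpleGraph V} {H : SimpleGraph W}

/-- transfer connectivity of a column into the box product -/
lemma sw_col [Nonempty W] {S : Set (V × W)} {u : V} {w₁ w₂ : W}
    (h1 : (u, w₁) ∉ S) (h2 : (u, w₂) ∉ S)
    (hcard : {w | (u, w) ∈ S}.ncard < vconn H) :
    SW (G □ H) S (u, w₁) (u, w₂) := by
  set T := {w | (u, w) ∈ S} with hT
  have hcon := (kconn_vconn (K := H)).2 T (Set.toFinite T) hcard
  have hr : (H.induce Tᶜ).Reachable ⟨w₁, h1⟩ ⟨w₂, h2⟩ := hcon.preconnected _ _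
  obtain ⟨p, hp⟩ := sw_of_induce_reachable hr
  refine ⟨p.map (G.boxProdRight H u).toHom, ?_⟩
  intro z hz
  have hz' : z ∈ (p.map (G.boxProdRight H u).toHom).support := hz
  rw [Walk.support_map, List.mem_map] at hz'
  obtain ⟨w, hw, rfl⟩ := hz'
  exact hp _ hw

lemma sw_row [Nonempty V] {S : Set (V × W)} {w : W} {a₁ a₂ : V}
    (h1 : (a₁, w) ∉ S) (h2 : (a₂, w) ∉ S)
    (hcard : {a | (a, w) ∈ S}.ncard < vconn G) :
    SW (G □ H) S (a₁, w) (a₂, w) := by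
  set T := {a | (a, w) ∈ S} with hT
  have hcon := (kconn_vconn (K := G)).2 T (Set.toFinite T) hcard
  have hr : (G.induce Tᶜ).Reachable ⟨a₁, h1⟩ ⟨a₂, h2⟩ := hcon.preconnected _ _
  obtain ⟨p, hp⟩ := sw_of_induce_reachable hr
  refine ⟨p.map (G.boxProdLeft H w).toHom, ?_⟩
  intro z hz
  have hz' : z ∈ (p.map (G.boxProdLeft H w).toHom).support := hz
  rw [Walk.support_map, List.mem_map] at hz'
  obtain ⟨a, ha, rfl⟩ := hz'
  exact hp _ ha

lemma exists_small_col {S : Set (V × W)} {c : ℕ}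
    (hcard : S.ncard < c * Fintype.card V) :
    ∃ u : V, {w | (u, w) ∈ S}.ncard < c := by
  classical
  by_contra h
  push_neg at h
  have key : S.toFinset.card = ∑ u : V, (S.toFinset.filter (fun (z : V × W) => z.1 = u)).card :=
    Finset.card_eq_sum_card_fiberwise (fun z _ => Finset.mem_univ z.1)
  have fib : ∀ u : V, (S.toFinset.filter (fun (z : V × W) => z.1 = u)).card
      = {w | (u, w) ∈ S}.ncard := by
    intro u
    rw [Set.ncard_eq_toFinset_card']
    apply Finset.card_bij (fun (z : V × W) _ => z.2)
    · intro a ha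
      simp only [Finset.mem_filter, Set.mem_toFinset] at ha ⊢
      obtain ⟨h1, h2⟩ := ha
      simpa [Set.mem_toFinset, ← h2] using h1
    · intro a ha b hb hab
      simp only [Finset.mem_filter, Set.mem_toFinset] at ha hb
      exact Prod.ext (ha.2.trans hb.2.symm) hab
    · intro w hw
      simp only [Set.mem_toFinset] at hw
      exact ⟨(u, w), by simpa [Set.mem_toFinset] using hw, rfl⟩
  have : c * Fintype.card V ≤ S.ncard := by
    rw [Set.ncard_eq_toFinset_card', key]
    calc c * Fintype.card V = ∑ _u : V, c := by
          rw [Finset.sum_const, Finset.card_univ, smul_eq_mul, mul_comm]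
      _ ≤ _ := Finset.sum_le_sum fun u _ => by rw [fib u]; exact h u
  omega

lemma rows_all_big {S : Set (V × W)} {c : ℕ}
    (h : ∀ w : W, c ≤ {a | (a, w) ∈ S}.ncard) :
    c * Fintype.card W ≤ S.ncard := by
  classical
  have key : S.toFinset.card = ∑ w : W, (S.toFinset.filter (fun (z : V × W) => z.2 = w)).card :=
    Finset.card_eq_sum_card_fiberwise (fun z _ => Finset.mem_univ z.2)
  have fib : ∀ w : W, (S.toFinset.filter (fun (z : V × W) => z.2 = w)).card
      = {a | (a, w) ∈ S}.ncard := by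
    intro w
    rw [Set.ncard_eq_toFinset_card']
    apply Finset.card_bij (fun (z : V × W) _ => z.1)
    · intro a ha
      simp only [Finset.mem_filter, Set.mem_toFinset] at ha ⊢
      obtain ⟨h1, h2⟩ := ha
      simpa [Set.mem_toFinset, ← h2] using h1
    · intro a ha b hb hab
      simp only [Finset.mem_filter, Set.mem_toFinset] at ha hb
      exact Prod.ext hab (ha.2.trans hb.2.symm)
    · intro a ha
      simp only [Set.mem_toFinset] at ha
      exact ⟨(a, w), by simpa [Set.mem_toFinset] using ha, rfl⟩
  rw [Set.ncard_eq_toFinset_card', key]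
  calc c * Fintype.card W = ∑ _w : W, c := by
        rw [Finset.sum_const, Finset.card_univ, smul_eq_mul, mul_comm]
    _ ≤ _ := Finset.sum_le_sum fun w _ => by rw [fib w]; exact h w

end SpacapanAux

namespace SpacapanAux

variable {V W : Type*} [Fintype V] [Fintype W] {G : SimpleGraph V} {H : SimpleGraph W}

lemma walk_dist_suffix {u₁ : V} : ∀ {c : V} (p : G.Walk c u₁) (i : ℕ),
    G.dist (p.getVert i) u₁ ≤ p.length - i := by
  intro c p
  induction p with
  | nil =>
      intro i
      rw [Walk.getVert_of_length_le _ (by simp : Walk.nil.length ≤ i)]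
      simp [SimpleGraph.dist_self]
  | cons h p ih =>
      intro i
      cases i with
      | zero =>
          rw [Walk.getVert_zero]
          simpa using SimpleGraph.dist_le (Walk.cons h p)
      | succ i =>
          have : (Walk.cons h p).getVert (i + 1) = p.getVert i := rfl
          rw [this]
          simpa using ih i

/-- The core counting lemma (Špacapan): if some reachability class `X` misses the
column `u₁` entirely and contains no full column, then `S` has at least `δG + δH`
elements. -/
lemma UL [DecidableRel G.Adj] [DecidableRel H.Adj]
    (hGc : G.Connected) (hHc : H.Connected)
    {S : Set (V × W)} {x₀ : V × W} (hx₀ : x₀ ∉ S) (u₁ : V)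
    (hfree : ∀ w, ¬ ((u₁, w) ∉ S ∧ SW (G □ H) S x₀ (u₁, w)))
    (hiii : ∀ a : V, ∃ w, ¬ ((a, w) ∉ S ∧ SW (G □ H) S x₀ (a, w))) :
    G.minDegree + H.minDegree ≤ S.ncard := by
  classical
  set X : V × W → Prop := fun z => z ∉ S ∧ SW (G □ H) S x₀ z with hXdef
  have hclos : ∀ {z z' : V × W}, X z → (G □ H).Adj z z' → z' ∉ S → X z' :=
    fun hz ha hz' => ⟨hz', hz.2.adj ha hz'⟩
  have hclos' : ∀ {z z' : V × W}, X z → (G □ H).Adj z z' → ¬ X z' → z' ∈ S :=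
    fun hz ha hz' => by by_contra h; exact hz' (hclos hz ha h)
  -- main induction
  have main : ∀ (d : ℕ) (a : V) (b : W), X (a, b) →
      ∀ (q : G.Walk a u₁), q.length = G.dist a u₁ → q.length ≤ d →
      G.minDegree + H.minDegree ≤ S.ncard := by
    intro d
    induction d using Nat.strong_induction_on with
    | _ d IH =>
      intro a b hX q hq hqd
      cases q with
      | nil => exact absurd hX (hfree b)
      | @cons _ a₁ _ h q' =>
        -- the tail is a shortest walk
        have hq'len : q'.length + 1 = G.dist a u₁ := by simpa using hq
        have hq' : q'.length = G.dist a₁ u₁ := by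
          have h1 : G.dist a₁ u₁ ≤ q'.length := SimpleGraph.dist_le q'
          obtain ⟨r, hr⟩ := hGc.exists_walk_length_eq_dist a₁ u₁
          have h2 : G.dist a u₁ ≤ G.dist a₁ u₁ + 1 := by
            calc G.dist a u₁ ≤ (Walk.cons h r).length := SimpleGraph.dist_le _
              _ = G.dist a₁ u₁ + 1 := by simp [hr]
          omega
        -- g-side specification
        have gspec : ∀ b', H.Adj b b' → ∃ s : V × W, s ∈ S ∧ s.2 = b' ∧
            (s.1 = a ∨ s.1 = a₁ ∨ 2 ≤ G.dist a s.1) := by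
          intro b' hb'
          by_cases h1 : (a, b') ∈ S
          · exact ⟨(a, b'), h1, rfl, Or.inl rfl⟩
          have hX1 : X (a, b') := hclos hX (by simp [boxProd_adj_right, hb']) h1
          by_cases h2 : (a₁, b') ∈ S
          · exact ⟨(a₁, b'), h2, rfl, Or.inr (Or.inl rfl)⟩
          have hX2 : X (a₁, b') := hclos hX1 (by simp [boxProd_adj_left, h]) h2
          -- walk along q' in row b'
          have hex : ¬ X (q'.getVert q'.length, b') := by
            rw [Walk.getVert_length]; exact hfree b'
          have hexx : ∃ j, ¬ X (q'.getVert j, b') := ⟨q'.length, hex⟩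
          set j := Nat.find hexx with hjdef
          have hjspec : ¬ X (q'.getVert j, b') := Nat.find_spec hexx
          have hj0 : j ≠ 0 := by
            intro h0
            rw [h0, Walk.getVert_zero] at hjspec
            exact hjspec hX2
          have hjle : j ≤ q'.length := Nat.find_le hex
          have hXprev : X (q'.getVert (j - 1), b') := by
            by_contra hc
            have h2 : j ≤ j - 1 := Nat.find_le hc
            omega
          have hadj : G.Adj (q'.getVert (j - 1)) (q'.getVert j) := by
            have := q'.adj_getVert_succ (i := j - 1) (by omega)
            rwa [show j - 1 + 1 = j by omega] at this
          have hsS : (q'.getVert j, b') ∈ S :=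
            hclos' hXprev (by simp [boxProd_adj_left, hadj]) hjspec
          refine ⟨(q'.getVert j, b'), hsS, rfl, Or.inr (Or.inr ?_)⟩
          have hd1 : G.dist (q'.getVert j) u₁ ≤ q'.length - j := walk_dist_suffix q' j
          have htri : G.dist a u₁ ≤ G.dist a (q'.getVert j) + G.dist (q'.getVert j) u₁ :=
            hGc.dist_triangle
          show 2 ≤ G.dist a (q'.getVert j)
          omega
        -- f-side specification
        have fspec : ∀ a', G.Adj a a' → ∃ s : V × W, s ∈ S ∧ s.1 = a' ∧
            ((a', b) ∈ S → s = (a', b)) ∧ ((a', b) ∉ S → s.2 ≠ b) := by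
          intro a' ha'
          by_cases h1 : (a', b) ∈ S
          · exact ⟨(a', b), h1, rfl, fun _ => rfl, fun hc => absurd h1 hc⟩
          have hX1 : X (a', b) := hclos hX (by simp [boxProd_adj_left, ha']) h1
          obtain ⟨w, hw⟩ := hiii a'
          obtain ⟨r⟩ := hHc.preconnected b w
          have hex : ∃ j, ¬ X (a', r.getVert j) := ⟨r.length, by rw [Walk.getVert_length]; exact hw⟩
          set j := Nat.find hex with hjdef
          have hjspec : ¬ X (a', r.getVert j) := Nat.find_spec hex
          have hj0 : j ≠ 0 := by
            intro h0
            rw [h0, Walk.getVert_zero] at hjspec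
            exact hjspec hX1
          have hjle : j ≤ r.length := Nat.find_le (by rw [Walk.getVert_length]; exact hw)
          have hXprev : X (a', r.getVert (j - 1)) := by
            by_contra hc
            have h2 : j ≤ j - 1 := Nat.find_le hc
            omega
          have hadj : H.Adj (r.getVert (j - 1)) (r.getVert j) := by
            have := r.adj_getVert_succ (i := j - 1) (by omega)
            rwa [show j - 1 + 1 = j by omega] at this
          have hsS : (a', r.getVert j) ∈ S :=
            hclos' hXprev (by simp [boxProd_adj_right, hadj]) hjspec
          refine ⟨(a', r.getVert j), hsS, rfl, fun hc => absurd hc h1, fun _ hb => ?_⟩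
          rw [show (a', r.getVert j).2 = r.getVert j from rfl] at hb
          rw [hb] at hjspec
          exact hjspec hX1
        -- choice functions
        set fv : V → V × W := fun a' =>
          if ha' : G.Adj a a' then (fspec a' ha').choose else x₀ with hfv
        set gv : W → V × W := fun b' =>
          if hb' : H.Adj b b' then (gspec b' hb').choose else x₀ with hgv
        have fv1 : ∀ a', (ha' : G.Adj a a') → (fv a').1 = a' := by
          intro a' ha'; rw [hfv]; simp only [dif_pos ha']
          exact (fspec a' ha').choose_spec.2.1
        have fvS : ∀ a', (ha' : G.Adj a a') → fv a' ∈ S := by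
          intro a' ha'; rw [hfv]; simp only [dif_pos ha']
          exact (fspec a' ha').choose_spec.1
        have gv2 : ∀ b', (hb' : H.Adj b b') → (gv b').2 = b' := by
          intro b' hb'; rw [hgv]; simp only [dif_pos hb']
          exact (gspec b' hb').choose_spec.2.1
        have gvS : ∀ b', (hb' : H.Adj b b') → gv b' ∈ S := by
          intro b' hb'; rw [hgv]; simp only [dif_pos hb']
          exact (gspec b' hb').choose_spec.1
        by_cases hcol : ∃ a' ∈ G.neighborFinset a, ∃ b' ∈ H.neighborFinset b, fv a' = gv b'
        · -- collision: rebase at (a₁, b)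
          obtain ⟨a', ha', b', hb', hcoll⟩ := hcol
          rw [mem_neighborFinset] at ha' hb'
          have hs1 : (fv a').1 = a' := fv1 a' ha'
          have hs2 : (fv a').2 = b' := by rw [hcoll]; exact gv2 b' hb'
          have htri : (gv b').1 = a ∨ (gv b').1 = a₁ ∨ 2 ≤ G.dist a (gv b').1 := by
            rw [hgv]; simp only [dif_pos hb']
            exact (gspec b' hb').choose_spec.2.2
          rw [← hcoll, hs1] at htri
          have ha'a₁ : a' = a₁ := by
            rcases htri with h1 | h1 | h1
            · exact absurd (h1 ▸ ha') (G.irrefl)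
            · exact h1
            · have : G.dist a a' ≤ 1 := by
                calc G.dist a a' ≤ (Walk.cons ha' Walk.nil).length := SimpleGraph.dist_le _
                  _ = 1 := by simp
              omega
          have hmem : (a', b) ∉ S := by
            intro hmem
            have heq : fv a' = (a', b) := by
              rw [hfv]; simp only [dif_pos ha']
              exact (fspec a' ha').choose_spec.2.2.1 hmem
            rw [heq] at hs2
            exact (H.ne_of_adj hb') hs2
          have hXa' : X (a', b) := hclos hX (by simp [boxProd_adj_left, ha']) hmem
          rw [ha'a₁] at hXa'
          exact IH q'.length (by omega) a₁ b hXa' q' hq' le_rfl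
        · -- no collision: count
          push_neg at hcol
          set Ff := (G.neighborFinset a).image fv with hFf
          set Fg := (H.neighborFinset b).image gv with hFg
          have hdisj : Disjoint Ff Fg := by
            rw [Finset.disjoint_left]
            rintro s hsF hsG
            rw [hFf, Finset.mem_image] at hsF
            rw [hFg, Finset.mem_image] at hsG
            obtain ⟨a', ha', rfl⟩ := hsF
            obtain ⟨b', hb', heq⟩ := hsG
            exact hcol a' ha' b' hb' heq.symm
          have hsub : Ff ∪ Fg ⊆ S.toFinset := by
            intro s hs
            rw [Finset.mem_union] at hs
            rcases hs with hs | hs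
            · rw [hFf, Finset.mem_image] at hs
              obtain ⟨a', ha', rfl⟩ := hs
              rw [Set.mem_toFinset]
              exact fvS a' (by rwa [← mem_neighborFinset])
            · rw [hFg, Finset.mem_image] at hs
              obtain ⟨b', hb', rfl⟩ := hs
              rw [Set.mem_toFinset]
              exact gvS b' (by rwa [← mem_neighborFinset])
          have hcardf : Ff.card = G.degree a := by
            rw [hFf, Finset.card_image_of_injOn, card_neighborFinset_eq_degree]
            intro x hx y hy hxy
            rw [Finset.mem_coe, mem_neighborFinset] at hx hy
            rw [← fv1 x hx, ← fv1 y hy, hxy]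
          have hcardg : Fg.card = H.degree b := by
            rw [hFg, Finset.card_image_of_injOn, card_neighborFinset_eq_degree]
            intro x hx y hy hxy
            rw [Finset.mem_coe, mem_neighborFinset] at hx hy
            rw [← gv2 x hx, ← gv2 y hy, hxy]
          calc G.minDegree + H.minDegree ≤ G.degree a + H.degree b :=
                Nat.add_le_add (G.minDegree_le_degree a) (H.minDegree_le_degree b)
            _ = (Ff ∪ Fg).card := by rw [Finset.card_union_of_disjoint hdisj, hcardf, hcardg]
            _ ≤ S.toFinset.card := Finset.card_le_card hsub
            _ = S.ncard := (Set.ncard_eq_toFinset_card' S).symm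
  -- start the induction at x₀
  obtain ⟨a₀, b₀⟩ := x₀
  obtain ⟨q, hqd⟩ := hGc.exists_walk_length_eq_dist a₀ u₁
  exact main q.length a₀ b₀ ⟨hx₀, SW.refl hx₀⟩ q hqd le_rfl

end SpacapanAux

namespace SpacapanAux

variable {V W : Type*} [Fintype V] [Fintype W] {G : SimpleGraph V} {H : SimpleGraph W}

lemma main_sep [Nonempty V] [Nonempty W] [DecidableRel G.Adj] [DecidableRel H.Adj]
    (hGc : G.Connected) (hHc : H.Connected)
    {S : Set (V × W)} {x y : V × W} (hx : x ∉ S) (hy : y ∉ S)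
    (hsep : ¬ SW (G □ H) S x y) :
    min (min (vconn G * Fintype.card W) (vconn H * Fintype.card V))
      (G.minDegree + H.minDegree) ≤ S.ncard := by
  by_contra hlt
  push_neg at hlt
  rw [lt_min_iff, lt_min_iff] at hlt
  obtain ⟨⟨h1, h2⟩, h3⟩ := hlt
  -- a column with few S-vertices
  obtain ⟨u₀, hu₀⟩ := exists_small_col h2
  have hW : vconn H < Fintype.card W := by
    have := vconn_lt_card (K := H); rwa [Nat.card_eq_fintype_card] at this
  have hne : ∃ w₀, (u₀, w₀) ∉ S := by
    by_contra hc
    push_neg at hc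
    have : {w | (u₀, w) ∈ S} = Set.univ := Set.eq_univ_of_forall hc
    rw [this, Set.ncard_univ, Nat.card_eq_fintype_card] at hu₀
    omega
  obtain ⟨w₀, hw₀⟩ := hne
  set q₀ : V × W := (u₀, w₀) with hq₀
  -- a base point not connected to the good column
  have key : ∀ x' y' : V × W, x' ∉ S → y' ∉ S → ¬ SW (G □ H) S x' y' →
      ¬ SW (G □ H) S x' q₀ → False := by
    intro x' y' hx' hy' hsep' hxq
    have hfree : ∀ w, ¬ ((u₀, w) ∉ S ∧ SW (G □ H) S x' (u₀, w)) := by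
      rintro w ⟨hmem, hsw⟩
      exact hxq (hsw.trans (sw_col hmem hw₀ hu₀))
    by_cases hA : ∀ a : V, ∃ w, ¬ ((a, w) ∉ S ∧ SW (G □ H) S x' (a, w))
    · have := UL hGc hHc hx' u₀ hfree hA
      omega
    push_neg at hA
    obtain ⟨c, hc⟩ := hA
    have hfree' : ∀ w, ¬ ((c, w) ∉ S ∧ SW (G □ H) S y' (c, w)) := by
      rintro w ⟨hmem, hsw⟩
      exact hsep' ((hc w).2.trans hsw.symm)
    by_cases hB : ∀ a : V, ∃ w, ¬ ((a, w) ∉ S ∧ SW (G □ H) S y' (a, w))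
    · have := UL hGc hHc hy' c hfree' hB
      omega
    push_neg at hB
    obtain ⟨c', hc'⟩ := hB
    -- two full columns in different components: every row is a cut of G
    have hrows : ∀ w : W, vconn G ≤ {a | (a, w) ∈ S}.ncard := by
      intro w
      by_contra hsmall
      push_neg at hsmall
      have hsw : SW (G □ H) S (c, w) (c', w) := sw_row (hc w).1 (hc' w).1 hsmall
      exact hsep' (((hc w).2.trans hsw).trans (hc' w).2.symm)
    have := rows_all_big hrows
    omega
  by_cases hxq : SW (G □ H) S x q₀
  · by_cases hyq : SW (G □ H) S y q₀
    · exact hsep (hxq.trans hyq.symm)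
    · exact key y x hy hx (fun hs => hsep hs.symm) hyq
  · exact key x y hx hy hsep hxq

end SpacapanAux

namespace SpacapanAux

variable {V W : Type*} [Fintype V] [Fintype W] {G : SimpleGraph V} {H : SimpleGraph W}

lemma no_sw_from_isolated {A : Type*} {K : SimpleGraph A} {s : Set A} {z z' : A}
    (hz' : z' ≠ z) (hiso : ∀ v, K.Adj z v → v ∈ s) : ¬ SW K s z z' := by
  rintro ⟨p, hp⟩
  cases p with
  | nil => exact hz' rfl
  | @cons _ v _ h p' =>
      exact hp v (by simp [Walk.support_cons, p'.start_mem_support]) (hiso v h)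

/-- `κ(G □ H) ≤ δ(G) + δ(H)` -/
lemma upper_delta [DecidableRel G.Adj] [DecidableRel H.Adj]
    (hV2 : 2 ≤ Fintype.card V) (hW2 : 2 ≤ Fintype.card W) :
    vconn (G □ H) ≤ G.minDegree + H.minDegree := by
  classical
  have : Nonempty V := Fintype.card_pos_iff.1 (by omega)
  have : Nonempty W := Fintype.card_pos_iff.1 (by omega)
  obtain ⟨xv, hxv⟩ := G.exists_minimal_degree_vertex
  obtain ⟨yv, hyv⟩ := H.exists_minimal_degree_vertex
  set z : V × W := (xv, yv) with hz
  set s : Set (V × W) := (G □ H).neighborSet z with hs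
  have hcard : s.ncard = G.minDegree + H.minDegree := by
    rw [hs, Set.ncard_eq_toFinset_card']
    have : ((G □ H).neighborSet z).toFinset = (G □ H).neighborFinset z := rfl
    rw [this, card_neighborFinset_eq_degree, degree_boxProd, hxv, hyv]
  have hzs : z ∉ s := by simp [hs]
  -- there is another vertex outside s ∪ {z}
  have hbig : G.minDegree + H.minDegree + 2 ≤ Fintype.card (V × W) := by
    have d1 : G.minDegree < Fintype.card V :=
      lt_of_le_of_lt (G.minDegree_le_degree (Classical.arbitrary V)) (G.degree_lt_card_verts _)
    have d2 : H.minDegree < Fintype.card W :=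
      lt_of_le_of_lt (H.minDegree_le_degree (Classical.arbitrary W)) (H.degree_lt_card_verts _)
    have := Nat.add_le_mul hV2 hW2
    rw [Fintype.card_prod]
    omega
  have hex : ∃ z' : V × W, z' ∉ s ∧ z' ≠ z := by
    by_contra hc
    push_neg at hc
    have hsub : (Set.univ : Set (V × W)) ⊆ s ∪ {z} := by
      intro p _
      by_cases hp : p ∈ s
      · exact Or.inl hp
      · exact Or.inr (hc p hp)
    have := Set.ncard_le_ncard hsub (Set.toFinite _)
    have h2 := Set.ncard_union_le s {z}
    rw [Set.ncard_univ, Nat.card_eq_fintype_card] at this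
    simp only [Set.ncard_singleton] at h2
    omega
  obtain ⟨z', hz's, hz'z⟩ := hex
  by_contra hgt
  push_neg at hgt
  have hkc := kconn_vconn (K := G □ H)
  have hconn := hkc.2 s (Set.toFinite s) (by omega)
  have hr : ((G □ H).induce sᶜ).Reachable ⟨z, hzs⟩ ⟨z', hz's⟩ := hconn.preconnected _ _
  exact no_sw_from_isolated hz'z (fun v hv => hv) (sw_of_induce_reachable hr)

lemma ncard_cyl_left (s : Set V) : {p : V × W | p.1 ∈ s}.ncard = s.ncard * Fintype.card W := by
  classical
  rw [Set.ncard_eq_toFinset_card', Set.ncard_eq_toFinset_card']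
  have : {p : V × W | p.1 ∈ s}.toFinset = s.toFinset ×ˢ Finset.univ := by
    ext ⟨a, b⟩; simp
  rw [this, Finset.card_product, Finset.card_univ]

lemma ncard_cyl_right (s : Set W) : {p : V × W | p.2 ∈ s}.ncard = s.ncard * Fintype.card V := by
  classical
  rw [Set.ncard_eq_toFinset_card', Set.ncard_eq_toFinset_card']
  have : {p : V × W | p.2 ∈ s}.toFinset = Finset.univ ×ˢ s.toFinset := by
    ext ⟨a, b⟩; simp
  rw [this, Finset.card_product, Finset.card_univ, mul_comm]

lemma sw_proj_left {s : Set V} {z z' : V × W}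
    (h : SW (G □ H) {p : V × W | p.1 ∈ s} z z') : SW G s z.1 z'.1 := by
  obtain ⟨p, hp⟩ := h
  induction p with
  | nil => exact SW.refl (hp _ (Walk.start_mem_support _))
  | @cons u v w h p ih =>
      have hsupp : ∀ t ∈ p.support, t ∉ {p : V × W | p.1 ∈ s} :=
        fun t ht => hp t (by simp [Walk.support_cons, ht])
      have ihs : SW G s v.1 w.1 := ih hsupp
      have hu : u.1 ∉ s := hp u (Walk.start_mem_support _)
      rcases boxProd_adj.1 h with ⟨hG, _⟩ | ⟨_, heq⟩
      · exact ((ihs.symm.adj hG.symm hu)).symm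
      · rwa [heq]

lemma sw_proj_right {s : Set W} {z z' : V × W}
    (h : SW (G □ H) {p : V × W | p.2 ∈ s} z z') : SW H s z.2 z'.2 := by
  obtain ⟨p, hp⟩ := h
  induction p with
  | nil => exact SW.refl (hp _ (Walk.start_mem_support _))
  | @cons u v w h p ih =>
      have hsupp : ∀ t ∈ p.support, t ∉ {p : V × W | p.2 ∈ s} :=
        fun t ht => hp t (by simp [Walk.support_cons, ht])
      have ihs : SW H s v.2 w.2 := ih hsupp
      have hu : u.2 ∉ s := hp u (Walk.start_mem_support _)
      rcases boxProd_adj.1 h with ⟨_, heq⟩ | ⟨hH, _⟩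
      · rwa [heq]
      · exact ((ihs.symm.adj hH.symm hu)).symm

end SpacapanAux

namespace SpacapanAux

variable {V W : Type*} [Fintype V] [Fintype W] {G : SimpleGraph V} {H : SimpleGraph W}

lemma upper_left [DecidableRel G.Adj] [DecidableRel H.Adj]
    (hV2 : 2 ≤ Fintype.card V) (hW2 : 2 ≤ Fintype.card W) :
    vconn (G □ H) ≤ vconn G * Fintype.card W := by
  classical
  have hVne : Nonempty V := Fintype.card_pos_iff.1 (by omega)
  have hWne : Nonempty W := Fintype.card_pos_iff.1 (by omega)
  by_cases hlt : vconn G + 1 < Nat.card V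
  · have hnk : ¬ KConnected G (vconn G + 1) := fun h => by have := le_vconn h; omega
    rw [KConnected] at hnk
    push_neg at hnk
    obtain ⟨s, hsf, hscard, hsnc⟩ := hnk hlt
    have hne : sᶜ.Nonempty := by
      rw [Set.nonempty_compl]
      intro hc
      rw [hc, Set.ncard_univ] at hscard
      omega
    obtain ⟨a, b, ha, hb, hnsw⟩ := not_sw_of_not_connected hne hsnc
    have w₀ : W := Classical.arbitrary W
    have hle : vconn (G □ H) ≤ {p : V × W | p.1 ∈ s}.ncard :=
      vconn_le_of_sep (Set.toFinite _) (x := (a, w₀)) (y := (b, w₀)) ha hb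
        (fun hsw => hnsw (sw_proj_left hsw))
    rw [ncard_cyl_left] at hle
    exact hle.trans (Nat.mul_le_mul_right _ (by omega))
  · -- vconn G = card V - 1 : use the degree bound
    have hvc : Fintype.card V - 1 ≤ vconn G := by
      have h' := vconn_lt_card (K := G)
      rw [Nat.card_eq_fintype_card] at hlt h'
      omega
    have d1 : G.minDegree ≤ Fintype.card V - 1 := by
      have := G.degree_lt_card_verts (Classical.arbitrary V)
      have := G.minDegree_le_degree (Classical.arbitrary V)
      omega
    have d2 : H.minDegree ≤ Fintype.card W - 1 := by
      have := H.degree_lt_card_verts (Classical.arbitrary W)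
      have := H.minDegree_le_degree (Classical.arbitrary W)
      omega
    have harith : (Fintype.card V - 1) + (Fintype.card W - 1)
        ≤ (Fintype.card V - 1) * Fintype.card W := by
      have hm : Fintype.card W - 1 + 1 = Fintype.card W := by omega
      have e2 : (Fintype.card V - 1) * Fintype.card W
          = (Fintype.card V - 1) * (Fintype.card W - 1) + (Fintype.card V - 1) := by
        calc (Fintype.card V - 1) * Fintype.card W
            = (Fintype.card V - 1) * ((Fintype.card W - 1) + 1) := by rw [hm]
          _ = (Fintype.card V - 1) * (Fintype.card W - 1) + (Fintype.card V - 1) := by ring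
      have e1 : (Fintype.card W - 1) ≤ (Fintype.card V - 1) * (Fintype.card W - 1) :=
        Nat.le_mul_of_pos_left _ (by omega)
      omega
    calc vconn (G □ H) ≤ G.minDegree + H.minDegree := upper_delta hV2 hW2
      _ ≤ (Fintype.card V - 1) + (Fintype.card W - 1) := Nat.add_le_add d1 d2
      _ ≤ (Fintype.card V - 1) * Fintype.card W := harith
      _ ≤ vconn G * Fintype.card W := Nat.mul_le_mul_right _ hvc

lemma upper_right [DecidableRel G.Adj] [DecidableRel H.Adj]
    (hV2 : 2 ≤ Fintype.card V) (hW2 : 2 ≤ Fintype.card W) :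
    vconn (G □ H) ≤ vconn H * Fintype.card V := by
  classical
  have hVne : Nonempty V := Fintype.card_pos_iff.1 (by omega)
  have hWne : Nonempty W := Fintype.card_pos_iff.1 (by omega)
  by_cases hlt : vconn H + 1 < Nat.card W
  · have hnk : ¬ KConnected H (vconn H + 1) := fun h => by have := le_vconn h; omega
    rw [KConnected] at hnk
    push_neg at hnk
    obtain ⟨s, hsf, hscard, hsnc⟩ := hnk hlt
    have hne : sᶜ.Nonempty := by
      rw [Set.nonempty_compl]
      intro hc
      rw [hc, Set.ncard_univ] at hscard
      omega
    obtain ⟨a, b, ha, hb, hnsw⟩ := not_sw_of_not_connected hne hsnc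
    have v₀ : V := Classical.arbitrary V
    have hle : vconn (G □ H) ≤ {p : V × W | p.2 ∈ s}.ncard :=
      vconn_le_of_sep (Set.toFinite _) (x := (v₀, a)) (y := (v₀, b)) ha hb
        (fun hsw => hnsw (sw_proj_right hsw))
    rw [ncard_cyl_right] at hle
    exact hle.trans (Nat.mul_le_mul_right _ (by omega))
  · have hvc : Fintype.card W - 1 ≤ vconn H := by
      have h' := vconn_lt_card (K := H)
      rw [Nat.card_eq_fintype_card] at hlt h'
      omega
    have d1 : G.minDegree ≤ Fintype.card V - 1 := by
      have := G.degree_lt_card_verts (Classical.arbitrary V)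
      have := G.minDegree_le_degree (Classical.arbitrary V)
      omega
    have d2 : H.minDegree ≤ Fintype.card W - 1 := by
      have := H.degree_lt_card_verts (Classical.arbitrary W)
      have := H.minDegree_le_degree (Classical.arbitrary W)
      omega
    have harith : (Fintype.card W - 1) + (Fintype.card V - 1)
        ≤ (Fintype.card W - 1) * Fintype.card V := by
      have hm : Fintype.card V - 1 + 1 = Fintype.card V := by omega
      have e2 : (Fintype.card W - 1) * Fintype.card V
          = (Fintype.card W - 1) * (Fintype.card V - 1) + (Fintype.card W - 1) := by
        calc (Fintype.card W - 1) * Fintype.card V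
            = (Fintype.card W - 1) * ((Fintype.card V - 1) + 1) := by rw [hm]
          _ = (Fintype.card W - 1) * (Fintype.card V - 1) + (Fintype.card W - 1) := by ring
      have e1 : (Fintype.card V - 1) ≤ (Fintype.card W - 1) * (Fintype.card V - 1) :=
        Nat.le_mul_of_pos_left _ (by omega)
      omega
    calc vconn (G □ H) ≤ G.minDegree + H.minDegree := upper_delta hV2 hW2
      _ ≤ (Fintype.card V - 1) + (Fintype.card W - 1) := Nat.add_le_add d1 d2
      _ = (Fintype.card W - 1) + (Fintype.card V - 1) := Nat.add_comm _ _
      _ ≤ (Fintype.card W - 1) * Fintype.card V := harith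
      _ ≤ vconn H * Fintype.card V := Nat.mul_le_mul_right _ hvc

end SpacapanAux

open SpacapanAux in
/-- Špacapan: `κ(G □ H) = min{κ(G)|V(H)|, κ(H)|V(G)|, δ(G)+δ(H)}` for nontrivial
connected graphs. -/
theorem vconn_boxProd_eq {V W : Type*} [Fintype V] [Fintype W]
    (G : SimpleGraph V) (H : SimpleGraph W) [DecidableRel G.Adj] [DecidableRel H.Adj]
    (hG : G.Connected) (hH : H.Connected)
    (hVn : 2 ≤ Fintype.card V) (hWn : 2 ≤ Fintype.card W) :
    vconn (G □ H) =
      min (min (vconn G * Fintype.card W) (vconn H * Fintype.card V))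
        (G.minDegree + H.minDegree) := by
  
  classical
  have hVne : Nonempty V := Fintype.card_pos_iff.1 (by omega)
  have hWne : Nonempty W := Fintype.card_pos_iff.1 (by omega)
  have d1 : G.minDegree ≤ Fintype.card V - 1 := by
    have := G.degree_lt_card_verts (Classical.arbitrary V)
    have := G.minDegree_le_degree (Classical.arbitrary V)
    omega
  have d2 : H.minDegree ≤ Fintype.card W - 1 := by
    have := H.degree_lt_card_verts (Classical.arbitrary W)
    have := H.minDegree_le_degree (Classical.arbitrary W)
    omega
  have hmul := Nat.add_le_mul hVn hWn
  refine le_antisymm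
    (le_min (le_min (upper_left hVn hWn) (upper_right hVn hWn)) (upper_delta hVn hWn)) ?_
  refine le_vconn ⟨?_, ?_⟩
  · have h3 : min (min (vconn G * Fintype.card W) (vconn H * Fintype.card V))
        (G.minDegree + H.minDegree) ≤ G.minDegree + H.minDegree := min_le_right _ _
    rw [Nat.card_eq_fintype_card, Fintype.card_prod]
    omega
  · intro s hsf hscard
    have h3 : min (min (vconn G * Fintype.card W) (vconn H * Fintype.card V))
        (G.minDegree + H.minDegree) ≤ G.minDegree + H.minDegree := min_le_right _ _
    have hcompl : sᶜ.Nonempty := by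
      rw [Set.nonempty_compl]
      intro hc
      rw [hc, Set.ncard_univ, Nat.card_eq_fintype_card, Fintype.card_prod] at hscard
      omega
    rw [connected_iff]
    refine ⟨?_, hcompl.to_subtype⟩
    intro x y
    have hsw : SW (G □ H) s x.1 y.1 := by
      by_contra hnsw
      have := main_sep hG hH x.2 y.2 hnsw
      omega
    obtain ⟨p, hp⟩ := hsw
    exact induce_reachable_of_sw p hp
end

section
/- For n ≥ 4, the lexicographic product of the star K_{1,n−1} with the path P₃ satisfies κ₃(K_{1,n−1} ∘ P₃) = 3. -/
open SimpleGraph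

section TreeFromParent
variable {α : Type*}

lemma isTree_of_parent (G : SimpleGraph α) (r : α) (par : α → α) (rank : α → ℕ)
    (h1 : ∀ v, v ≠ r → G.Adj v (par v))
    (h2 : ∀ v, v ≠ r → rank (par v) < rank v)
    (h3 : ∀ u v, G.Adj u v → (u ≠ r ∧ v = par u) ∨ (v ≠ r ∧ u = par v)) :
    G.IsTree := by
  classical
  have reach : ∀ n v, rank v ≤ n → G.Reachable v r := by
    intro n
    induction n with
    | zero =>
      intro v hv
      by_cases h : v = r
      · subst h; exact Reachable.refl _
      · exact absurd (h2 v h) (by omega)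
    | succ n ih =>
      intro v hv
      by_cases h : v = r
      · subst h; exact Reachable.refl _
      · exact (h1 v h).reachable.trans (ih (par v) (by have := h2 v h; omega))
  constructor
  · rw [connected_iff]
    exact ⟨fun u v => (reach (rank u) u le_rfl).trans (reach (rank v) v le_rfl).symm, ⟨r⟩⟩
  · intro v c hc
    obtain ⟨u, hu, hmax⟩ : ∃ u ∈ c.support, ∀ w ∈ c.support, rank w ≤ rank u := by
      obtain ⟨u, hu, hmax⟩ := c.support.toFinset.exists_max_image rank
        ⟨v, by simp [Walk.start_mem_support]⟩
      exact ⟨u, by simpa using hu, fun w hw => hmax w (by simpa using hw)⟩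
    have hc' : (c.rotate u hu).IsCycle := hc.rotate hu
    have hsupp : ∀ w ∈ (c.rotate u hu).support, rank w ≤ rank u := by
      intro w hw
      rw [Walk.support_eq_cons] at hw
      rcases List.mem_cons.mp hw with rfl | hw
      · exact le_rfl
      · have := (Walk.support_rotate c u hu).mem_iff.mp hw
        exact hmax w (List.mem_of_mem_tail this)
    cases hq : c.rotate u hu with
    | nil => rw [hq] at hc'; exact absurd hc' (by simp [Walk.isCycle_def])
    | @cons _ x _ hadj q =>
      rw [hq] at hc' hsupp
      rw [Walk.cons_isCycle_iff] at hc'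
      obtain ⟨hqp, hqe⟩ := hc'
      have hux : u ≠ x := hadj.ne
      have hxr : rank x ≤ rank u := hsupp x (by simp)
      have hxpar : x = par u := by
        rcases h3 u x hadj with ⟨_, h⟩ | ⟨hx, h⟩
        · exact h
        · rw [h] at hxr; exact absurd (h2 x hx) (by omega)
      cases hq2 : q.reverse with
      | nil => exact hux rfl
      | @cons _ y _ hadj2 q2 =>
        have hyq : y ∈ q.support := by
          have : y ∈ q.reverse.support := by rw [hq2]; simp [Walk.support_cons]
          simpa [Walk.support_reverse] using this
        have hyu : rank y ≤ rank u := hsupp y (by simp [Walk.support_cons, hyq])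
        have hypar : y = par u := by
          rcases h3 u y hadj2 with ⟨_, h⟩ | ⟨hy, h⟩
          · exact h
          · rw [h] at hyu; exact absurd (h2 y hy) (by omega)
        have hxy : x = y := hxpar.trans hypar.symm
        have hmem : s(u, y) ∈ q.edges.reverse := by
          rw [← Walk.edges_reverse, hq2]; simp
        rw [← hxy] at hmem
        exact hqe (List.mem_reverse.mp hmem)

lemma coe_isTree_of_parent {V : Type*} {G : SimpleGraph V} (T : G.Subgraph) (r : V)
    (hr : r ∈ T.verts) (par : V → V) (rank : V → ℕ)
    (h1 : ∀ v ∈ T.verts, v ≠ r → T.Adj v (par v))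
    (h2 : ∀ v ∈ T.verts, v ≠ r → rank (par v) < rank v)
    (h3 : ∀ u v, T.Adj u v → (u ≠ r ∧ v = par u) ∨ (v ≠ r ∧ u = par v)) :
    T.coe.IsTree := by
  classical
  have hparmem : ∀ v ∈ T.verts, v ≠ r → par v ∈ T.verts := by
    intro v hv hvr
    exact T.edge_vert (h1 v hv hvr).symm
  refine isTree_of_parent T.coe ⟨r, hr⟩
    (fun v => if h : v.val = r ∨ v.val ∉ T.verts then ⟨r, hr⟩
      else ⟨par v.val, hparmem v.val (by tauto) (by tauto)⟩)
    (fun v => rank v.val) ?_ ?_ ?_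
  · intro v hv
    have hvr : v.val ≠ r := fun h => hv (Subtype.ext h)
    have hcond : ¬(v.val = r ∨ v.val ∉ T.verts) := by simp [hvr, v.prop]
    simp only [dif_neg hcond]
    exact h1 v.val v.prop hvr
  · intro v hv
    have hvr : v.val ≠ r := fun h => hv (Subtype.ext h)
    have hcond : ¬(v.val = r ∨ v.val ∉ T.verts) := by simp [hvr, v.prop]
    simp only [dif_neg hcond]
    exact h2 v.val v.prop hvr
  · intro u v huv
    have huv' : T.Adj u.val v.val := huv
    rcases h3 _ _ huv' with ⟨h, h'⟩ | ⟨h, h'⟩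
    · left
      refine ⟨fun hh => h (congrArg Subtype.val hh), ?_⟩
      apply Subtype.ext
      have hcond : ¬(u.val = r ∨ u.val ∉ T.verts) := by simp [h, u.prop]
      simp only [dif_neg hcond]
      exact h'
    · right
      refine ⟨fun hh => h (congrArg Subtype.val hh), ?_⟩
      apply Subtype.ext
      have hcond : ¬(v.val = r ∨ v.val ∉ T.verts) := by simp [h, v.prop]
      simp only [dif_neg hcond]
      exact h'

end TreeFromParent
section Esub
variable {V : Type*} (G : SimpleGraph V)

def esub (l : List (V × V)) : G.Subgraph where
  verts := {v | ∃ p ∈ l, v = p.1 ∨ v = p.2}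
  Adj a b := (∃ p ∈ l, s(a, b) = s(p.1, p.2)) ∧ G.Adj a b
  adj_sub h := h.2
  edge_vert := by
    rintro a b ⟨⟨p, hp, he⟩, -⟩
    rcases Sym2.eq_iff.mp he with ⟨h1, h2⟩ | ⟨h1, h2⟩
    · exact ⟨p, hp, Or.inl h1⟩
    · exact ⟨p, hp, Or.inr h1⟩
  symm := by
    constructor
    rintro a b ⟨⟨p, hp, he⟩, hadj⟩
    exact ⟨⟨p, hp, (Sym2.eq_swap).trans he⟩, hadj.symm⟩

variable {G}

lemma esub_verts {l : List (V × V)} : (esub G l).verts = {v | ∃ p ∈ l, v = p.1 ∨ v = p.2} := rfl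

lemma esub_adj {l : List (V × V)} {a b : V} :
    (esub G l).Adj a b ↔ (∃ p ∈ l, s(a, b) = s(p.1, p.2)) ∧ G.Adj a b := Iff.rfl

end Esub
section Shapes
variable {V : Type*} {G : SimpleGraph V}

lemma star_tree (h : V) (L : List V) (hL : ∀ x ∈ L, G.Adj h x) (hne : L ≠ []) :
    ∃ T : G.Subgraph, T.verts = insert h {x | x ∈ L} ∧
      (∀ a b, T.Adj a b → ∃ x ∈ L, s(a, b) = s(h, x)) ∧
      T.coe.IsTree := by
  classical
  refine ⟨esub G (L.map fun x => (h, x)), ?_, ?_, ?_⟩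
  · ext v
    simp only [esub_verts, Set.mem_setOf_eq, List.mem_map, Set.mem_insert_iff]
    constructor
    · rintro ⟨p, ⟨x, hx, rfl⟩, hv⟩
      rcases hv with rfl | rfl
      · exact Or.inl rfl
      · exact Or.inr hx
    · rintro (rfl | hv)
      · obtain ⟨x, hx⟩ := List.exists_mem_of_ne_nil L hne
        exact ⟨(v, x), ⟨x, hx, rfl⟩, Or.inl rfl⟩
      · exact ⟨(h, v), ⟨v, hv, rfl⟩, Or.inr rfl⟩
  · rintro a b ⟨⟨p, hp, he⟩, -⟩
    obtain ⟨x, hx, rfl⟩ := List.mem_map.mp hp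
    exact ⟨x, hx, he⟩
  · obtain ⟨x0, hx0⟩ := List.exists_mem_of_ne_nil L hne
    refine coe_isTree_of_parent _ h ⟨(h, x0), List.mem_map.mpr ⟨x0, hx0, rfl⟩, Or.inl rfl⟩
      (fun _ => h) (fun v => if v = h then 0 else 1) ?_ ?_ ?_
    · rintro v ⟨p, hp, hv⟩ hvh
      obtain ⟨x, hx, rfl⟩ := List.mem_map.mp hp
      rcases hv with rfl | rfl
      · exact absurd rfl hvh
      · exact ⟨⟨(h, v), List.mem_map.mpr ⟨v, hx, rfl⟩, Sym2.eq_swap⟩, (hL v hx).symm⟩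
    · intro v _ hvh
      simp [hvh]
    · rintro u v ⟨⟨p, hp, he⟩, -⟩
      obtain ⟨x, hx, rfl⟩ := List.mem_map.mp hp
      have hxh : x ≠ h := (hL x hx).ne'
      rcases Sym2.eq_iff.mp he with ⟨rfl, rfl⟩ | ⟨rfl, rfl⟩
      · exact Or.inr ⟨hxh, rfl⟩
      · exact Or.inl ⟨hxh, rfl⟩

lemma spider5_tree (h p q m t : V)
    (hp : G.Adj h p) (hq : G.Adj h q) (hm : G.Adj h m) (ht : G.Adj m t)
    (hpt : p ≠ t) (hqt : q ≠ t) (hth : t ≠ h) :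
    ∃ T : G.Subgraph, T.verts = {h, p, q, m, t} ∧
      (∀ a b, T.Adj a b →
        s(a,b) = s(h,p) ∨ s(a,b) = s(h,q) ∨ s(a,b) = s(h,m) ∨ s(a,b) = s(m,t)) ∧
      T.coe.IsTree := by
  classical
  have hph : p ≠ h := hp.ne'
  have hqh : q ≠ h := hq.ne'
  have hmh : m ≠ h := hm.ne'
  have hmt : m ≠ t := ht.ne
  refine ⟨esub G [(h,p),(h,q),(h,m),(m,t)], ?_, ?_, ?_⟩
  · ext v
    simp only [esub_verts, Set.mem_setOf_eq, List.mem_cons, List.not_mem_nil, or_false,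
      Set.mem_insert_iff, Set.mem_singleton_iff]
    constructor
    · rintro ⟨pr, (rfl | rfl | rfl | rfl), (rfl | rfl)⟩ <;> tauto
    · rintro (rfl | rfl | rfl | rfl | rfl)
      exacts [⟨(v,p), by tauto, by tauto⟩, ⟨(h,v), by tauto, by tauto⟩,
        ⟨(h,v), by tauto, by tauto⟩, ⟨(h,v), by tauto, by tauto⟩, ⟨(m,v), by tauto, by tauto⟩]
  · rintro a b ⟨⟨pr, hpr, he⟩, -⟩
    simp only [List.mem_cons, List.not_mem_nil, or_false] at hpr
    rcases hpr with rfl | rfl | rfl | rfl <;> tauto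
  · refine coe_isTree_of_parent _ h ⟨(h,p), by simp, Or.inl rfl⟩
      (fun v => if v = t then m else h)
      (fun v => if v = h then 0 else if v = t then 2 else 1) ?_ ?_ ?_
    · rintro v ⟨pr, hpr, hv⟩ hvh
      simp only [List.mem_cons, List.not_mem_nil, or_false] at hpr
      have key : v = p ∨ v = q ∨ v = m ∨ v = t := by
        rcases hpr with rfl | rfl | rfl | rfl <;> rcases hv with rfl | rfl <;> tauto
      rcases key with rfl | rfl | rfl | rfl
      · simp only [if_neg hpt]; exact ⟨⟨(h,v), by tauto, Sym2.eq_swap⟩, hp.symm⟩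
      · simp only [if_neg hqt]; exact ⟨⟨(h,v), by tauto, Sym2.eq_swap⟩, hq.symm⟩
      · simp only [if_neg hmt]; exact ⟨⟨(h,v), by tauto, Sym2.eq_swap⟩, hm.symm⟩
      · simp only [if_pos rfl, if_true]; exact ⟨⟨(m,v), by tauto, Sym2.eq_swap⟩, ht.symm⟩
    · rintro v ⟨pr, hpr, hv⟩ hvh
      simp only [List.mem_cons, List.not_mem_nil, or_false] at hpr
      have key : v = p ∨ v = q ∨ v = m ∨ v = t := by
        rcases hpr with rfl | rfl | rfl | rfl <;> rcases hv with rfl | rfl <;> tauto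
      rcases key with rfl | rfl | rfl | rfl
      · simp [hpt, hph]
      · simp [hqt, hqh]
      · simp [hmt, hmh]
      · simp [hth, hmt, hmh]
    · rintro u v ⟨⟨pr, hpr, he⟩, -⟩
      simp only [List.mem_cons, List.not_mem_nil, or_false] at hpr
      rcases hpr with rfl | rfl | rfl | rfl <;>
        rcases Sym2.eq_iff.mp he with ⟨rfl, rfl⟩ | ⟨rfl, rfl⟩
      · exact Or.inr ⟨hph, by simp only [if_neg hpt]⟩
      · exact Or.inl ⟨hph, by simp only [if_neg hpt]⟩
      · exact Or.inr ⟨hqh, by simp only [if_neg hqt]⟩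
      · exact Or.inl ⟨hqh, by simp only [if_neg hqt]⟩
      · exact Or.inr ⟨hmh, by simp only [if_neg hmt]⟩
      · exact Or.inl ⟨hmh, by simp only [if_neg hmt]⟩
      · exact Or.inr ⟨hth, by simp only [if_pos rfl, if_true]⟩
      · exact Or.inl ⟨hth, by simp only [if_pos rfl, if_true]⟩

lemma tree5b_tree (h p q m1 m2 : V)
    (e1 : G.Adj h m1) (e2 : G.Adj m1 p) (e3 : G.Adj h m2) (e4 : G.Adj m2 q)
    (hm1q : m1 ≠ q) (hm2p : m2 ≠ p) (hph : p ≠ h) (hqh : q ≠ h) (hpq : p ≠ q) :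
    ∃ T : G.Subgraph, T.verts = {h, p, q, m1, m2} ∧
      (∀ a b, T.Adj a b →
        s(a,b) = s(h,m1) ∨ s(a,b) = s(m1,p) ∨ s(a,b) = s(h,m2) ∨ s(a,b) = s(m2,q)) ∧
      T.coe.IsTree := by
  classical
  have hm1h : m1 ≠ h := e1.ne'
  have hm2h : m2 ≠ h := e3.ne'
  have hm1p : m1 ≠ p := e2.ne
  have hm2q : m2 ≠ q := e4.ne
  refine ⟨esub G [(h,m1),(m1,p),(h,m2),(m2,q)], ?_, ?_, ?_⟩
  · ext v
    simp only [esub_verts, Set.mem_setOf_eq, List.mem_cons, List.not_mem_nil, or_false,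
      Set.mem_insert_iff, Set.mem_singleton_iff]
    constructor
    · rintro ⟨pr, (rfl | rfl | rfl | rfl), (rfl | rfl)⟩ <;> tauto
    · rintro (rfl | rfl | rfl | rfl | rfl)
      exacts [⟨(v,m1), by tauto, by tauto⟩, ⟨(m1,v), by tauto, by tauto⟩,
        ⟨(m2,v), by tauto, by tauto⟩, ⟨(h,v), by tauto, by tauto⟩, ⟨(h,v), by tauto, by tauto⟩]
  · rintro a b ⟨⟨pr, hpr, he⟩, -⟩
    simp only [List.mem_cons, List.not_mem_nil, or_false] at hpr
    rcases hpr with rfl | rfl | rfl | rfl <;> tauto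
  · refine coe_isTree_of_parent _ h ⟨(h,m1), by simp, Or.inl rfl⟩
      (fun v => if v = p then m1 else if v = q then m2 else h)
      (fun v => if v = h then 0 else if v = p ∨ v = q then 2 else 1) ?_ ?_ ?_
    · rintro v ⟨pr, hpr, hv⟩ hvh
      simp only [List.mem_cons, List.not_mem_nil, or_false] at hpr
      have key : v = m1 ∨ v = p ∨ v = m2 ∨ v = q := by
        rcases hpr with rfl | rfl | rfl | rfl <;> rcases hv with rfl | rfl <;> tauto
      rcases key with rfl | rfl | rfl | rfl
      · simp only [if_neg hm1p, if_neg hm1q]; exact ⟨⟨(h,v), by tauto, Sym2.eq_swap⟩, e1.symm⟩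
      · simp only [if_pos rfl, if_true]; exact ⟨⟨(m1,v), by tauto, Sym2.eq_swap⟩, e2.symm⟩
      · simp only [if_neg hm2p, if_neg hm2q]; exact ⟨⟨(h,v), by tauto, Sym2.eq_swap⟩, e3.symm⟩
      · simp only [if_neg (Ne.symm hpq), if_pos rfl, if_true]
        exact ⟨⟨(m2,v), by tauto, Sym2.eq_swap⟩, e4.symm⟩
    · rintro v ⟨pr, hpr, hv⟩ hvh
      simp only [List.mem_cons, List.not_mem_nil, or_false] at hpr
      have key : v = m1 ∨ v = p ∨ v = m2 ∨ v = q := by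
        rcases hpr with rfl | rfl | rfl | rfl <;> rcases hv with rfl | rfl <;> tauto
      rcases key with rfl | rfl | rfl | rfl
      · simp [hm1p, hm1q, hm1h]
      · simp [hph, hm1p, hm1q, hm1h]
      · simp [hm2p, hm2q, hm2h]
      · simp [hqh, Ne.symm hpq, hm2p, hm2q, hm2h]
    · rintro u v ⟨⟨pr, hpr, he⟩, -⟩
      simp only [List.mem_cons, List.not_mem_nil, or_false] at hpr
      rcases hpr with rfl | rfl | rfl | rfl <;>
        rcases Sym2.eq_iff.mp he with ⟨rfl, rfl⟩ | ⟨rfl, rfl⟩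
      · exact Or.inr ⟨hm1h, by simp only [if_neg hm1p, if_neg hm1q]⟩
      · exact Or.inl ⟨hm1h, by simp only [if_neg hm1p, if_neg hm1q]⟩
      · exact Or.inr ⟨hph, by simp only [if_pos rfl, if_true]⟩
      · exact Or.inl ⟨hph, by simp only [if_pos rfl, if_true]⟩
      · exact Or.inr ⟨hm2h, by simp only [if_neg hm2p, if_neg hm2q]⟩
      · exact Or.inl ⟨hm2h, by simp only [if_neg hm2p, if_neg hm2q]⟩
      · exact Or.inr ⟨hqh, by simp only [if_neg (Ne.symm hpq), if_pos rfl, if_true]⟩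
      · exact Or.inl ⟨hqh, by simp only [if_neg (Ne.symm hpq), if_pos rfl, if_true]⟩
end Shapes

section Assembly

lemma build3 {V : Type*} {G : SimpleGraph V} {S : Set V} (T0 T1 T2 : G.Subgraph)
    (h0 : IsSteinerTree G S T0) (h1 : IsSteinerTree G S T1) (h2 : IsSteinerTree G S T2)
    (d01 : IntDisjoint S T0 T1) (d02 : IntDisjoint S T0 T2) (d12 : IntDisjoint S T1 T2) :
    ∃ f : Fin 3 → G.Subgraph, (∀ i, IsSteinerTree G S (f i)) ∧
      ∀ i j, i ≠ j → IntDisjoint S (f i) (f j) := by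
  have symm : ∀ A B : G.Subgraph, IntDisjoint S A B → IntDisjoint S B A := fun A B h =>
    ⟨by rw [Set.inter_comm]; exact h.1, fun u v hh => h.2 u v ⟨hh.2, hh.1⟩⟩
  refine ⟨![T0, T1, T2], fun i => ?_, fun i j hij => ?_⟩
  · fin_cases i <;> assumption
  · fin_cases i <;> fin_cases j <;>
      first
        | exact absurd rfl hij
        | exact d01
        | exact d02
        | exact d12
        | exact symm _ _ d01
        | exact symm _ _ d02
        | exact symm _ _ d12

lemma insert_inter_insert {α : Type*} {S : Set α} {a b : α} (hab : a ≠ b)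
    (ha : a ∉ S) (hb : b ∉ S) : insert a S ∩ insert b S = S := by
  ext v
  simp only [Set.mem_inter_iff, Set.mem_insert_iff]
  constructor
  · rintro ⟨rfl | hv, h⟩
    · rcases h with h | h
      · exact absurd h hab
      · exact absurd h ha
    · exact hv
  · intro hv; exact ⟨Or.inr hv, Or.inr hv⟩

lemma insert2_inter_insert2 {α : Type*} {S : Set α} {a a' b b' : α}
    (hA : a ∉ S) (hA' : a' ∉ S)
    (h1 : a ≠ b) (h2 : a ≠ b') (h3 : a' ≠ b) (h4 : a' ≠ b') :
    insert a (insert a' S) ∩ insert b (insert b' S) = S := by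
  ext v
  simp only [Set.mem_inter_iff, Set.mem_insert_iff]
  constructor
  · rintro ⟨h1v, h2v⟩
    rcases h1v with rfl | rfl | hv
    · rcases h2v with h | h | h
      exacts [absurd h h1, absurd h h2, absurd h hA]
    · rcases h2v with h | h | h
      exacts [absurd h h3, absurd h h4, absurd h hA']
    · exact hv
  · intro hv; exact ⟨Or.inr (Or.inr hv), Or.inr (Or.inr hv)⟩

end Assembly

section StarPathLemmas
variable {m : ℕ}

lemma center_ne_leaf {k : Fin 3} {w : Option (Fin m) × Fin 3} (hw : w.1 ≠ none) :
    ((none, k) : Option (Fin m) × Fin 3) ≠ w :=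
  fun h => hw (congrArg Prod.fst h).symm

lemma center_ne_center {k k' : Fin 3} (h : k ≠ k') :
    ((none, k) : Option (Fin m) × Fin 3) ≠ (none, k') :=
  fun he => h (congrArg Prod.snd he)

lemma adj_center {k : Fin 3} {w : Option (Fin m) × Fin 3} (hw : w.1 ≠ none) :
    (lexProd (_root_.starGraph m) (pathGraph 3)).Adj (none, k) w :=
  Or.inl ⟨Ne.symm hw, Or.inl rfl⟩

lemma adj_centers {k k' : Fin 3} (h : (pathGraph 3).Adj k k') :
    (lexProd (_root_.starGraph m) (pathGraph 3)).Adj (none, k) (none, k') :=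
  Or.inr ⟨rfl, h⟩

lemma adj_col (u : Option (Fin m)) {a b : Fin 3} (h : (pathGraph 3).Adj a b) :
    (lexProd (_root_.starGraph m) (pathGraph 3)).Adj (u, a) (u, b) :=
  Or.inr ⟨rfl, h⟩

lemma fin3_pathAdj (r : Fin 3) : ∃ r', (pathGraph 3).Adj r r' := by
  have : ∃ r' : Fin 3, r.val + 1 = r'.val ∨ r'.val + 1 = r.val := by revert r; decide
  obtain ⟨r', h⟩ := this
  exact ⟨r', pathGraph_adj.mpr h⟩

lemma exists_fresh_col (hm : 3 ≤ m) (a b : Option (Fin m)) :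
    ∃ c : Fin m, some c ≠ a ∧ some c ≠ b := by
  classical
  have h0 : (0:ℕ) < m := by omega
  have h1 : (1:ℕ) < m := by omega
  have h2 : (2:ℕ) < m := by omega
  by_cases h0a : (some (⟨0, h0⟩ : Fin m) : Option (Fin m)) = a
  · by_cases h1b : (some (⟨1, h1⟩ : Fin m) : Option (Fin m)) = b
    · refine ⟨⟨2, h2⟩, ?_, ?_⟩
      · rw [← h0a]; simp
      · rw [← h1b]; simp
    · refine ⟨⟨1, h1⟩, ?_, h1b⟩
      rw [← h0a]; simp
  · by_cases h0b : (some (⟨0, h0⟩ : Fin m) : Option (Fin m)) = b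
    · by_cases h1a : (some (⟨1, h1⟩ : Fin m) : Option (Fin m)) = a
      · refine ⟨⟨2, h2⟩, ?_, ?_⟩
        · rw [← h1a]; simp
        · rw [← h0b]; simp
      · refine ⟨⟨1, h1⟩, h1a, ?_⟩
        rw [← h0b]; simp
    · exact ⟨⟨0, h0⟩, h0a, h0b⟩

lemma stars3 {V : Type*} {G : SimpleGraph V} (x y z h0 h1 h2 : V)
    (hadj : ∀ k ∈ [h0, h1, h2], ∀ w ∈ [x, y, z], G.Adj k w)
    (h01 : h0 ≠ h1) (h02 : h0 ≠ h2) (h12 : h1 ≠ h2)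
    (hnot : ∀ k ∈ [h0, h1, h2], k ∉ ({x, y, z} : Set V)) :
    ∃ f : Fin 3 → G.Subgraph,
      (∀ i, IsSteinerTree G {x, y, z} (f i)) ∧
      ∀ i j, i ≠ j → IntDisjoint {x, y, z} (f i) (f j) := by
  have hset : {w | w ∈ [x, y, z]} = ({x, y, z} : Set V) := by ext w; simp
  obtain ⟨T0, hv0, he0, ht0⟩ := star_tree (G := G) h0 [x, y, z]
    (hadj h0 (by simp) ) (by simp)
  obtain ⟨T1, hv1, he1, ht1⟩ := star_tree (G := G) h1 [x, y, z]
    (hadj h1 (by simp)) (by simp)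
  obtain ⟨T2, hv2, he2, ht2⟩ := star_tree (G := G) h2 [x, y, z]
    (hadj h2 (by simp)) (by simp)
  rw [hset] at hv0 hv1 hv2
  have hst : ∀ (T : G.Subgraph) (k : V),
      T.verts = insert k {x, y, z} → T.coe.IsTree →
      IsSteinerTree G {x, y, z} T := by
    intro T k hv ht
    exact ⟨ht, by rw [hv]; exact Set.subset_insert _ _⟩
  have hdis : ∀ (T T' : G.Subgraph) (k k' : V),
      k ≠ k' → k ∉ ({x,y,z} : Set V) → k' ∉ ({x,y,z} : Set V) →
      T.verts = insert k {x, y, z} → T'.verts = insert k' {x, y, z} →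
      (∀ a b, T.Adj a b → ∃ w ∈ [x,y,z], s(a,b) = s(k, w)) →
      (∀ a b, T'.Adj a b → ∃ w ∈ [x,y,z], s(a,b) = s(k', w)) →
      IntDisjoint {x, y, z} T T' := by
    intro T T' k k' hkk hkm hkm' hv hv' he he'
    constructor
    · rw [hv, hv']
      exact insert_inter_insert hkk hkm hkm'
    · rintro u v ⟨ha, hb⟩
      obtain ⟨w, hwmem, hw⟩ := he u v ha
      obtain ⟨w', hwmem', hw'⟩ := he' u v hb
      rw [hw] at hw'
      simp only [List.mem_cons, List.not_mem_nil, or_false] at hwmem hwmem'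
      rcases Sym2.eq_iff.mp hw' with ⟨hh1, hh2⟩ | ⟨hh1, hh2⟩
      · exact hkk hh1
      · apply hkm
        rw [hh1]
        simp only [Set.mem_insert_iff, Set.mem_singleton_iff]
        tauto
  exact build3 T0 T1 T2 (hst T0 h0 hv0 ht0) (hst T1 h1 hv1 ht1) (hst T2 h2 hv2 ht2)
    (hdis T0 T1 h0 h1 h01 (hnot h0 (by simp)) (hnot h1 (by simp)) hv0 hv1 he0 he1)
    (hdis T0 T2 h0 h2 h02 (hnot h0 (by simp)) (hnot h2 (by simp)) hv0 hv2 he0 he2)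
    (hdis T1 T2 h1 h2 h12 (hnot h1 (by simp)) (hnot h2 (by simp)) hv1 hv2 he1 he2)

lemma not_mem_leaves {k : Fin 3} {x y z : Option (Fin m) × Fin 3}
    (hx : x.1 ≠ none) (hy : y.1 ≠ none) (hz : z.1 ≠ none) :
    ((none, k) : Option (Fin m) × Fin 3) ∉ ({x, y, z} : Set (Option (Fin m) × Fin 3)) := by
  simp only [Set.mem_insert_iff, Set.mem_singleton_iff]
  rintro (h | h | h)
  exacts [center_ne_leaf hx h, center_ne_leaf hy h, center_ne_leaf hz h]

lemma leaf_not_mem_centers {w : Option (Fin m) × Fin 3} (hw : w.1 ≠ none) {a b c : Fin 3} :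
    w ∉ ({(none, a), (none, b), (none, c)} : Set (Option (Fin m) × Fin 3)) := by
  simp only [Set.mem_insert_iff, Set.mem_singleton_iff]
  rintro (h | h | h) <;> exact hw (congrArg Prod.fst h)

lemma trees_case0 (x y z : Option (Fin m) × Fin 3)
    (hx : x.1 ≠ none) (hy : y.1 ≠ none) (hz : z.1 ≠ none) :
    ∃ f : Fin 3 → (lexProd (_root_.starGraph m) (pathGraph 3)).Subgraph,
      (∀ i, IsSteinerTree (lexProd (_root_.starGraph m) (pathGraph 3)) {x, y, z} (f i)) ∧
      ∀ i j, i ≠ j → IntDisjoint {x, y, z} (f i) (f j) := by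
  apply stars3 x y z ((none, 0) : Option (Fin m) × Fin 3) (none, 1) (none, 2)
  · intro k hk w hw
    simp only [List.mem_cons, List.not_mem_nil, or_false] at hk hw
    have hwn : w.1 ≠ none := by rcases hw with rfl | rfl | rfl <;> assumption
    rcases hk with rfl | rfl | rfl <;> exact adj_center hwn
  · exact center_ne_center (by decide)
  · exact center_ne_center (by decide)
  · exact center_ne_center (by decide)
  · intro k hk
    simp only [List.mem_cons, List.not_mem_nil, or_false] at hk
    rcases hk with rfl | rfl | rfl <;> exact not_mem_leaves hx hy hz

lemma trees_case3 (hm : 3 ≤ m) (a b c : Fin 3)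
    (hab : a ≠ b) (hac : a ≠ c) (hbc : b ≠ c) :
    ∃ f : Fin 3 → (lexProd (_root_.starGraph m) (pathGraph 3)).Subgraph,
      (∀ i, IsSteinerTree (lexProd (_root_.starGraph m) (pathGraph 3))
        {(none, a), (none, b), (none, c)} (f i)) ∧
      ∀ i j, i ≠ j → IntDisjoint {(none, a), (none, b), (none, c)} (f i) (f j) := by
  have h0 : (0:ℕ) < m := by omega
  set u : Fin m := ⟨0, h0⟩ with hu
  apply stars3 _ _ _ ((some u, 0) : Option (Fin m) × Fin 3) (some u, 1) (some u, 2)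
  · intro k hk w hw
    simp only [List.mem_cons, List.not_mem_nil, or_false] at hk hw
    have hkn : k.1 ≠ none := by rcases hk with rfl | rfl | rfl <;> simp
    have : ∀ r : Fin 3, (lexProd (_root_.starGraph m) (pathGraph 3)).Adj k (none, r) :=
      fun r => (adj_center hkn).symm
    rcases hw with rfl | rfl | rfl <;> exact this _
  · exact fun h => (by decide : ((0:Fin 3) = 1) → False) (congrArg Prod.snd h)
  · exact fun h => (by decide : ((0:Fin 3) = 2) → False) (congrArg Prod.snd h)
  · exact fun h => (by decide : ((1:Fin 3) = 2) → False) (congrArg Prod.snd h)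
  · intro k hk
    simp only [List.mem_cons, List.not_mem_nil, or_false] at hk
    have hkn : k.1 ≠ none := by rcases hk with rfl | rfl | rfl <;> simp
    exact leaf_not_mem_centers hkn

lemma fin3_two_ne (a : Fin 3) : ∃ k1 k2 : Fin 3, k1 ≠ k2 ∧ k1 ≠ a ∧ k2 ≠ a := by
  revert a; decide

lemma trees_case1 (hm : 3 ≤ m) (a : Fin 3) (y z : Option (Fin m) × Fin 3)
    (hy : y.1 ≠ none) (hz : z.1 ≠ none) (hyz : y ≠ z) :
    ∃ f : Fin 3 → (lexProd (_root_.starGraph m) (pathGraph 3)).Subgraph,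
      (∀ i, IsSteinerTree (lexProd (_root_.starGraph m) (pathGraph 3)) {(none, a), y, z} (f i)) ∧
      ∀ i j, i ≠ j → IntDisjoint {(none, a), y, z} (f i) (f j) := by
  obtain ⟨k1, k2, hk12, hk1a, hk2a⟩ := fin3_two_ne a
  obtain ⟨wc, hwcy, hwcz⟩ := exists_fresh_col hm y.1 z.1
  have hw1n : ((some wc, (0:Fin 3)) : Option (Fin m) × Fin 3).1 ≠ none := by simp
  have hw2n : ((some wc, (1:Fin 3)) : Option (Fin m) × Fin 3).1 ≠ none := by simp
  obtain ⟨TA, hvA, heA, htA⟩ := star_tree (G := lexProd (_root_.starGraph m) (pathGraph 3))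
    (none, a) [y, z] (by
      intro w hw
      simp only [List.mem_cons, List.not_mem_nil, or_false] at hw
      rcases hw with rfl | rfl
      exacts [adj_center hy, adj_center hz]) (by simp)
  have hvA' : TA.verts = {(none, a), y, z} := by
    rw [hvA]; ext w; simp
  obtain ⟨T1, hv1, he1, ht1⟩ := spider5_tree (G := lexProd (_root_.starGraph m) (pathGraph 3))
    (none, k1) y z (some wc, 0) (none, a)
    (adj_center hy) (adj_center hz) (adj_center hw1n) ((adj_center hw1n).symm)
    (Ne.symm (center_ne_leaf hy)) (Ne.symm (center_ne_leaf hz))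
    (center_ne_center (Ne.symm hk1a))
  obtain ⟨T2, hv2, he2, ht2⟩ := spider5_tree (G := lexProd (_root_.starGraph m) (pathGraph 3))
    (none, k2) y z (some wc, 1) (none, a)
    (adj_center hy) (adj_center hz) (adj_center hw2n) ((adj_center hw2n).symm)
    (Ne.symm (center_ne_leaf hy)) (Ne.symm (center_ne_leaf hz))
    (center_ne_center (Ne.symm hk2a))
  apply build3 TA T1 T2
  · exact ⟨htA, by rw [hvA']⟩
  · refine ⟨ht1, ?_⟩
    rw [hv1]; intro w hw
    simp only [Set.mem_insert_iff, Set.mem_singleton_iff] at hw ⊢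
    tauto
  · refine ⟨ht2, ?_⟩
    rw [hv2]; intro w hw
    simp only [Set.mem_insert_iff, Set.mem_singleton_iff] at hw ⊢
    tauto
  · constructor
    · rw [hvA', hv1]
      apply Set.inter_eq_left.mpr
      intro w hw
      simp only [Set.mem_insert_iff, Set.mem_singleton_iff] at hw ⊢
      tauto
    · rintro u v ⟨hA, h1⟩
      obtain ⟨w, hwmem, hw⟩ := heA u v hA
      simp only [List.mem_cons, List.not_mem_nil, or_false] at hwmem
      have f' := he1 u v h1
      clear hA h1 heA he1 he2 hvA hvA' hv1 hv2 htA ht1 ht2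
      clear TA T1 T2
      rcases f' with f | f | f | f <;> rw [hw] at f <;>
        rcases hwmem with rfl | rfl <;>
        rcases Sym2.eq_iff.mp f with ⟨g1, g2⟩ | ⟨g1, g2⟩ <;>
        (try clear f hw) <;> (try subst g1) <;> (try subst g2) <;>
        first
          | exact hr2 (congrArg Prod.snd g1).symm
          | exact hr2 (congrArg Prod.snd g1)
          | exact hr2 (congrArg Prod.snd g2).symm
          | exact hr2 (congrArg Prod.snd g2)
          | exact hwcz (congrArg Prod.fst g1)
          | exact hwcz (congrArg Prod.fst g1).symm
          | exact hwcz (congrArg Prod.fst g2)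
          | exact hwcz (congrArg Prod.fst g2).symm
          | exact hz (congrArg Prod.fst g1)
          | exact hz (congrArg Prod.fst g1).symm
          | exact hz (congrArg Prod.fst g2)
          | exact hz (congrArg Prod.fst g2).symm
          | simp_all [Prod.ext_iff]
  · constructor
    · rw [hvA', hv2]
      apply Set.inter_eq_left.mpr
      intro w hw
      simp only [Set.mem_insert_iff, Set.mem_singleton_iff] at hw ⊢
      tauto
    · rintro u v ⟨hA, h2⟩
      obtain ⟨w, hwmem, hw⟩ := heA u v hA
      simp only [List.mem_cons, List.not_mem_nil, or_false] at hwmem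
      have f' := he2 u v h2
      clear hA h2 heA he1 he2 hvA hvA' hv1 hv2 htA ht1 ht2
      clear TA T1 T2
      rcases f' with f | f | f | f <;> rw [hw] at f <;>
        rcases hwmem with rfl | rfl <;>
        rcases Sym2.eq_iff.mp f with ⟨g1, g2⟩ | ⟨g1, g2⟩ <;>
        (try clear f hw) <;> (try subst g1) <;> (try subst g2) <;>
        first
          | exact hr2 (congrArg Prod.snd g1).symm
          | exact hr2 (congrArg Prod.snd g1)
          | exact hr2 (congrArg Prod.snd g2).symm
          | exact hr2 (congrArg Prod.snd g2)
          | exact hwcz (congrArg Prod.fst g1)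
          | exact hwcz (congrArg Prod.fst g1).symm
          | exact hwcz (congrArg Prod.fst g2)
          | exact hwcz (congrArg Prod.fst g2).symm
          | exact hz (congrArg Prod.fst g1)
          | exact hz (congrArg Prod.fst g1).symm
          | exact hz (congrArg Prod.fst g2)
          | exact hz (congrArg Prod.fst g2).symm
          | simp_all [Prod.ext_iff]
  · constructor
    · rw [hv1, hv2]
      have e1 : ({(none, k1), y, z, (some wc, 0), (none, a)} :
          Set (Option (Fin m) × Fin 3)) =
          insert (none, k1) (insert (some wc, 0) {(none, a), y, z}) := by
        ext w; simp only [Set.mem_insert_iff, Set.mem_singleton_iff]; tauto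
      have e2 : ({(none, k2), y, z, (some wc, 1), (none, a)} :
          Set (Option (Fin m) × Fin 3)) =
          insert (none, k2) (insert (some wc, 1) {(none, a), y, z}) := by
        ext w; simp only [Set.mem_insert_iff, Set.mem_singleton_iff]; tauto
      rw [e1, e2]
      apply insert2_inter_insert2
      · simp only [Set.mem_insert_iff, Set.mem_singleton_iff]
        rintro (h | h | h)
        exacts [center_ne_center hk1a h, center_ne_leaf hy h, center_ne_leaf hz h]
      · simp only [Set.mem_insert_iff, Set.mem_singleton_iff]
        rintro (h | h | h)
        · exact (by simp [Prod.ext_iff] : ¬ _) h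
        · exact hwcy (by rw [← h])
        · exact hwcz (by rw [← h])
      · exact center_ne_center hk12
      · exact fun h => (by simp [Prod.ext_iff] : ¬ _) h
      · exact fun h => (by simp [Prod.ext_iff] : ¬ _) h
      · exact fun h => (by simp [Prod.ext_iff, Fin.ext_iff] : ¬ _) h
    · rintro u v ⟨h1, h2⟩
      have f' := he1 u v h1
      have g' := he2 u v h2
      clear h1 h2 heA he1 he2 hvA hvA' hv1 hv2 htA ht1 ht2
      clear TA T1 T2
      rcases f' with f | f | f | f <;>
        rcases g' with g | g | g | g <;> rw [f] at g <;>
        rcases Sym2.eq_iff.mp g with ⟨g1, g2⟩ | ⟨g1, g2⟩ <;>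
        (try clear g f) <;> (try subst g1) <;> (try subst g2) <;>
        first
          | exact hr2 (congrArg Prod.snd g1).symm
          | exact hr2 (congrArg Prod.snd g1)
          | exact hr2 (congrArg Prod.snd g2).symm
          | exact hr2 (congrArg Prod.snd g2)
          | exact hwcz (congrArg Prod.fst g1)
          | exact hwcz (congrArg Prod.fst g1).symm
          | exact hwcz (congrArg Prod.fst g2)
          | exact hwcz (congrArg Prod.fst g2).symm
          | exact hz (congrArg Prod.fst g1)
          | exact hz (congrArg Prod.fst g1).symm
          | exact hz (congrArg Prod.fst g2)
          | exact hz (congrArg Prod.fst g2).symm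
          | simp_all [Prod.ext_iff]

lemma fin3_third (a b : Fin 3) (hab : a ≠ b) : ∃ c : Fin 3, c ≠ a ∧ c ≠ b := by
  revert a b; decide

lemma trees_case2 (hm : 3 ≤ m) (a b : Fin 3) (hab : a ≠ b) (z : Option (Fin m) × Fin 3)
    (hz : z.1 ≠ none) :
    ∃ f : Fin 3 → (lexProd (_root_.starGraph m) (pathGraph 3)).Subgraph,
      (∀ i, IsSteinerTree (lexProd (_root_.starGraph m) (pathGraph 3)) {(none, a), (none, b), z} (f i)) ∧
      ∀ i j, i ≠ j → IntDisjoint {(none, a), (none, b), z} (f i) (f j) := by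
  obtain ⟨c, hca, hcb⟩ := fin3_third a b hab
  obtain ⟨wc, hwcz, -⟩ := exists_fresh_col hm z.1 z.1
  obtain ⟨r', hr'⟩ := fin3_pathAdj z.2
  have hr2 : r' ≠ z.2 := hr'.ne'
  have hwn : ∀ r : Fin 3, ((some wc, r) : Option (Fin m) × Fin 3).1 ≠ none := by simp
  have hz'n : ((z.1, r') : Option (Fin m) × Fin 3).1 ≠ none := hz
  have hzw : ∀ r : Fin 3, z ≠ (some wc, r) := by
    intro r h; exact hwcz (congrArg Prod.fst h).symm
  obtain ⟨T1, hv1, he1, ht1⟩ := star_tree (G := lexProd (_root_.starGraph m) (pathGraph 3))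
    z [(none, a), (none, b)] (by
      intro w hw
      simp only [List.mem_cons, List.not_mem_nil, or_false] at hw
      rcases hw with rfl | rfl <;> exact (adj_center hz).symm) (by simp)
  have hv1' : T1.verts = {(none, a), (none, b), z} := by
    rw [hv1]; ext w; simp only [Set.mem_insert_iff, Set.mem_singleton_iff]; simp; tauto
  obtain ⟨T2, hv2, he2, ht2⟩ := spider5_tree (G := lexProd (_root_.starGraph m) (pathGraph 3))
    (some wc, 0) (none, a) (none, b) (none, c) z
    ((adj_center (hwn 0)).symm) ((adj_center (hwn 0)).symm) ((adj_center (hwn 0)).symm)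
    (adj_center hz)
    (center_ne_leaf hz) (center_ne_leaf hz) (hzw 0)
  obtain ⟨T3, hv3, he3, ht3⟩ := tree5b_tree (G := lexProd (_root_.starGraph m) (pathGraph 3))
    (none, a) (none, b) z (some wc, 1) (z.1, r')
    (adj_center (hwn 1)) ((adj_center (hwn 1)).symm) (adj_center hz'n)
    (adj_col z.1 hr'.symm)
    (hzw 1).symm (Ne.symm (center_ne_leaf hz'n)) (center_ne_center (Ne.symm hab))
    (Ne.symm (center_ne_leaf hz)) (center_ne_leaf hz)
  apply build3 T1 T2 T3
  · exact ⟨ht1, by rw [hv1']⟩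
  · refine ⟨ht2, ?_⟩
    rw [hv2]; intro w hw
    simp only [Set.mem_insert_iff, Set.mem_singleton_iff] at hw ⊢
    tauto
  · refine ⟨ht3, ?_⟩
    rw [hv3]; intro w hw
    simp only [Set.mem_insert_iff, Set.mem_singleton_iff] at hw ⊢
    tauto
  · constructor
    · rw [hv1', hv2]
      apply Set.inter_eq_left.mpr
      intro w hw
      simp only [Set.mem_insert_iff, Set.mem_singleton_iff] at hw ⊢
      tauto
    · rintro u v ⟨h1, h2⟩
      obtain ⟨w, hwmem, hw⟩ := he1 u v h1
      simp only [List.mem_cons, List.not_mem_nil, or_false] at hwmem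
      have f' := he2 u v h2
      clear h1 h2 he1 he2 he3 hv1 hv1' hv2 hv3 ht1 ht2 ht3
      clear T1 T2 T3
      clear hr' hwn hz'n hzw hm
      rcases f' with f | f | f | f <;> rw [hw] at f <;>
        rcases hwmem with rfl | rfl <;>
        rcases Sym2.eq_iff.mp f with ⟨g1, g2⟩ | ⟨g1, g2⟩ <;>
        (try clear f hw) <;> (try subst g1) <;> (try subst g2) <;>
        first
          | exact hr2 (congrArg Prod.snd g1).symm
          | exact hr2 (congrArg Prod.snd g1)
          | exact hr2 (congrArg Prod.snd g2).symm
          | exact hr2 (congrArg Prod.snd g2)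
          | exact hwcz (congrArg Prod.fst g1)
          | exact hwcz (congrArg Prod.fst g1).symm
          | exact hwcz (congrArg Prod.fst g2)
          | exact hwcz (congrArg Prod.fst g2).symm
          | exact hz (congrArg Prod.fst g1)
          | exact hz (congrArg Prod.fst g1).symm
          | exact hz (congrArg Prod.fst g2)
          | exact hz (congrArg Prod.fst g2).symm
          | simp_all [Prod.ext_iff]
  · constructor
    · rw [hv1', hv3]
      apply Set.inter_eq_left.mpr
      intro w hw
      simp only [Set.mem_insert_iff, Set.mem_singleton_iff] at hw ⊢
      tauto
    · rintro u v ⟨h1, h2⟩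
      obtain ⟨w, hwmem, hw⟩ := he1 u v h1
      simp only [List.mem_cons, List.not_mem_nil, or_false] at hwmem
      have f' := he3 u v h2
      clear h1 h2 he1 he2 he3 hv1 hv1' hv2 hv3 ht1 ht2 ht3
      clear T1 T2 T3
      clear hr' hwn hz'n hzw hm
      rcases f' with f | f | f | f <;> rw [hw] at f <;>
        rcases hwmem with rfl | rfl <;>
        rcases Sym2.eq_iff.mp f with ⟨g1, g2⟩ | ⟨g1, g2⟩ <;>
        (try clear f hw) <;> (try subst g1) <;> (try subst g2) <;>
        first
          | exact hr2 (congrArg Prod.snd g1).symm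
          | exact hr2 (congrArg Prod.snd g1)
          | exact hr2 (congrArg Prod.snd g2).symm
          | exact hr2 (congrArg Prod.snd g2)
          | exact hwcz (congrArg Prod.fst g1)
          | exact hwcz (congrArg Prod.fst g1).symm
          | exact hwcz (congrArg Prod.fst g2)
          | exact hwcz (congrArg Prod.fst g2).symm
          | exact hz (congrArg Prod.fst g1)
          | exact hz (congrArg Prod.fst g1).symm
          | exact hz (congrArg Prod.fst g2)
          | exact hz (congrArg Prod.fst g2).symm
          | simp_all [Prod.ext_iff]
  · constructor
    · rw [hv2, hv3]
      have e2 : ({(some wc, 0), (none, a), (none, b), (none, c), z} :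
          Set (Option (Fin m) × Fin 3)) =
          insert (some wc, 0) (insert (none, c) {(none, a), (none, b), z}) := by
        ext w; simp only [Set.mem_insert_iff, Set.mem_singleton_iff]; tauto
      have e3 : ({(none, a), (none, b), z, (some wc, 1), (z.1, r')} :
          Set (Option (Fin m) × Fin 3)) =
          insert (some wc, 1) (insert (z.1, r') {(none, a), (none, b), z}) := by
        ext w; simp only [Set.mem_insert_iff, Set.mem_singleton_iff]; tauto
      rw [e2, e3]
      apply insert2_inter_insert2
      · simp only [Set.mem_insert_iff, Set.mem_singleton_iff]
        rintro (h | h | h)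
        · exact (hwn 0) (congrArg Prod.fst h)
        · exact (hwn 0) (congrArg Prod.fst h)
        · exact (hzw 0) h.symm
      · simp only [Set.mem_insert_iff, Set.mem_singleton_iff]
        rintro (h | h | h)
        · exact center_ne_center hca h
        · exact center_ne_center hcb h
        · exact center_ne_leaf hz h
      · intro h
        exact (by decide : ¬ ((0:Fin 3) = 1)) (congrArg Prod.snd h)
      · intro h
        exact hwcz (congrArg Prod.fst h)
      · intro h
        exact (hwn 1) (congrArg Prod.fst h).symm
      · intro h
        exact hz (congrArg Prod.fst h).symm
    · rintro u v ⟨h1, h2⟩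
      have f' := he2 u v h1
      have g' := he3 u v h2
      clear h1 h2 he1 he2 he3 hv1 hv1' hv2 hv3 ht1 ht2 ht3
      clear T1 T2 T3
      clear hr' hwn hz'n hzw hm
      rcases f' with f | f | f | f <;>
        rcases g' with g | g | g | g <;> rw [f] at g <;>
        rcases Sym2.eq_iff.mp g with ⟨g1, g2⟩ | ⟨g1, g2⟩ <;>
        (try clear g f) <;> (try subst g1) <;> (try subst g2) <;>
        first
          | exact hr2 (congrArg Prod.snd g1).symm
          | exact hr2 (congrArg Prod.snd g1)
          | exact hr2 (congrArg Prod.snd g2).symm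
          | exact hr2 (congrArg Prod.snd g2)
          | exact hwcz (congrArg Prod.fst g1)
          | exact hwcz (congrArg Prod.fst g1).symm
          | exact hwcz (congrArg Prod.fst g2)
          | exact hwcz (congrArg Prod.fst g2).symm
          | exact hz (congrArg Prod.fst g1)
          | exact hz (congrArg Prod.fst g1).symm
          | exact hz (congrArg Prod.fst g2)
          | exact hz (congrArg Prod.fst g2).symm
          | simp_all [Prod.ext_iff]

lemma set3_perm132 {α : Type*} (x y z : α) : ({x, y, z} : Set α) = {x, z, y} :=
  congrArg (insert x) (Set.pair_comm y z)

lemma set3_perm231 {α : Type*} (x y z : α) : ({x, y, z} : Set α) = {y, z, x} := by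
  ext w; simp only [Set.mem_insert_iff, Set.mem_singleton_iff]; tauto

lemma set3_perm213 {α : Type*} (x y z : α) : ({x, y, z} : Set α) = {y, x, z} := by
  ext w; simp only [Set.mem_insert_iff, Set.mem_singleton_iff]; tauto

lemma set3_perm312 {α : Type*} (x y z : α) : ({x, y, z} : Set α) = {z, x, y} := by
  ext w; simp only [Set.mem_insert_iff, Set.mem_singleton_iff]; tauto

lemma lower3 (hm : 3 ≤ m) (S : Set (Option (Fin m) × Fin 3)) (hS : S.ncard = 3) :
    ∃ f : Fin 3 → (lexProd (_root_.starGraph m) (pathGraph 3)).Subgraph,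
      (∀ i, IsSteinerTree (lexProd (_root_.starGraph m) (pathGraph 3)) S (f i)) ∧
      ∀ i j, i ≠ j → IntDisjoint S (f i) (f j) := by
  obtain ⟨x, y, z, hxy, hxz, hyz, rfl⟩ := Set.ncard_eq_three.mp hS
  rcases x with ⟨_ | xc, xr⟩ <;> rcases y with ⟨_ | yc, yr⟩ <;> rcases z with ⟨_ | zc, zr⟩
  · exact trees_case3 hm xr yr zr
      (fun h => hxy (by rw [h])) (fun h => hxz (by rw [h])) (fun h => hyz (by rw [h]))
  · exact trees_case2 hm xr yr (fun h => hxy (by rw [h])) (some zc, zr) (by simp)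
  · rw [set3_perm132]
    exact trees_case2 hm xr zr (fun h => hxz (by rw [h])) (some yc, yr) (by simp)
  · exact trees_case1 hm xr (some yc, yr) (some zc, zr) (by simp) (by simp) hyz
  · rw [set3_perm231]
    exact trees_case2 hm yr zr (fun h => hyz (by rw [h])) (some xc, xr) (by simp)
  · rw [set3_perm213]
    exact trees_case1 hm yr (some xc, xr) (some zc, zr) (by simp) (by simp) hxz
  · rw [set3_perm312]
    exact trees_case1 hm zr (some xc, xr) (some yc, yr) (by simp) (by simp) hxy
  · exact trees_case0 (some xc, xr) (some yc, yr) (some zc, zr) (by simp) (by simp) (by simp)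

lemma tree_has_edge {V : Type*} {G : SimpleGraph V} {T : G.Subgraph} (ht : T.coe.IsTree)
    {x y : V} (hx : x ∈ T.verts) (hy : y ∈ T.verts) (hxy : x ≠ y) :
    ∃ a b, T.Adj a b := by
  obtain ⟨p⟩ := ht.isConnected.preconnected ⟨x, hx⟩ ⟨y, hy⟩
  cases p with
  | nil => exact absurd rfl hxy
  | cons h q => exact ⟨_, _, h⟩

lemma steiner_set_bdd (S : Set (Option (Fin m) × Fin 3))
    (hS2 : ∃ x y, x ∈ S ∧ y ∈ S ∧ x ≠ y) :
    ∀ n ∈ {n | ∃ f : Fin n → (lexProd (_root_.starGraph m) (pathGraph 3)).Subgraph,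
      (∀ i, IsSteinerTree (lexProd (_root_.starGraph m) (pathGraph 3)) S (f i)) ∧
      ∀ i j, i ≠ j → IntDisjoint S (f i) (f j)},
      n ≤ Fintype.card (Sym2 (Option (Fin m) × Fin 3)) := by
  rintro n ⟨f, hf, hd⟩
  obtain ⟨x, y, hx, hy, hxy⟩ := hS2
  have hedge : ∀ i, ∃ a b, (f i).Adj a b := fun i =>
    tree_has_edge (hf i).1 ((hf i).2 hx) ((hf i).2 hy) hxy
  choose A B hAB using hedge
  have hinj : Function.Injective (fun i => s(A i, B i)) := by
    intro i j hij
    by_contra hne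
    have hadj : (f j).Adj (A i) (B i) := by
      rcases Sym2.eq_iff.mp hij with ⟨h1, h2⟩ | ⟨h1, h2⟩
      · rw [h1, h2]; exact hAB j
      · rw [h1, h2]; exact (hAB j).symm
    exact (hd i j hne).2 (A i) (B i) ⟨hAB i, hadj⟩
  simpa using Fintype.card_le_of_injective _ hinj

lemma exists_center_of_walk {T : (lexProd (_root_.starGraph m) (pathGraph 3)).Subgraph}
    {u v : ↥T.verts} (p : T.coe.Walk u v) :
    u.val.1 ≠ none → v.val.1 ≠ u.val.1 → ∃ w ∈ T.verts, w.1 = none := by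
  induction p with
  | nil => intro _ h2; exact absurd rfl h2
  | @cons a b c h q ih =>
    intro h1 h2
    have hT : T.Adj a.val b.val := h
    rcases T.adj_sub hT with ⟨_, hnone | hnone⟩ | ⟨heq, -⟩
    · exact absurd hnone h1
    · exact ⟨b.val, b.prop, hnone⟩
    · exact ih (heq ▸ h1) (heq ▸ h2)

end StarPathLemmas



section Final
variable {m : ℕ}

lemma upper3 (h0 : 0 < m) (h1 : 1 < m) (h2 : 2 < m) :
    ∀ n ∈ {n | ∃ f : Fin n → (lexProd (_root_.starGraph m) (pathGraph 3)).Subgraph,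
      (∀ i, IsSteinerTree (lexProd (_root_.starGraph m) (pathGraph 3))
        {(some ⟨0,h0⟩, 0), (some ⟨1,h1⟩, 0), (some ⟨2,h2⟩, 0)} (f i)) ∧
      ∀ i j, i ≠ j → IntDisjoint
        {(some ⟨0,h0⟩, 0), (some ⟨1,h1⟩, 0), (some ⟨2,h2⟩, 0)} (f i) (f j)}, n ≤ 3 := by
  rintro n ⟨f, hf, hd⟩
  by_contra hn
  push_neg at hn
  have hcen : ∀ i : Fin n, ∃ k : Fin 3, (none, k) ∈ (f i).verts := by
    intro i
    have hx : ((some ⟨0,h0⟩, (0:Fin 3)) : Option (Fin m) × Fin 3) ∈ (f i).verts :=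
      (hf i).2 (by simp)
    have hy : ((some ⟨1,h1⟩, (0:Fin 3)) : Option (Fin m) × Fin 3) ∈ (f i).verts :=
      (hf i).2 (by simp)
    obtain ⟨p⟩ := (hf i).1.isConnected.preconnected ⟨_, hx⟩ ⟨_, hy⟩
    obtain ⟨w, hw, hwn⟩ := exists_center_of_walk p (by simp)
      (by simp [Fin.ext_iff])
    refine ⟨w.2, ?_⟩
    have hww : w = (none, w.2) := by
      rcases w with ⟨w1, w2⟩
      simp only at hwn
      rw [hwn]
    rw [← hww]; exact hw
  choose g hg using hcen
  have h4n : 4 ≤ n := by omega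
  obtain ⟨i, j, hij, hgij⟩ := Fintype.exists_ne_map_eq_of_card_lt
    (fun i : Fin 4 => g (Fin.castLE h4n i)) (by simp)
  have hIJ : Fin.castLE h4n i ≠ Fin.castLE h4n j :=
    fun h => hij (Fin.castLE_injective _ h)
  have hmm : ((none, g (Fin.castLE h4n i)) : Option (Fin m) × Fin 3) ∈
      (f (Fin.castLE h4n i)).verts ∩ (f (Fin.castLE h4n j)).verts := by
    refine ⟨hg _, ?_⟩
    rw [hgij]; exact hg _
  rw [(hd _ _ hIJ).1] at hmm
  simp only [Set.mem_insert_iff, Set.mem_singleton_iff, Prod.ext_iff] at hmm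
  rcases hmm with ⟨h, -⟩ | ⟨h, -⟩ | ⟨h, -⟩ <;> exact Option.some_ne_none _ h.symm

end Final

/-- `κ₃(K_{1,n-1} ∘ P₃) = 3` for `n ≥ 4`. -/
theorem genConn_three_star_lexProd_path (n : ℕ) (hn : 4 ≤ n) :
    genConn (lexProd (_root_.starGraph (n - 1)) (pathGraph 3)) 3 = 3 := by
  have hm : 3 ≤ n - 1 := by omega
  have h0 : 0 < n - 1 := by omega
  have h1 : 1 < n - 1 := by omega
  have h2 : 2 < n - 1 := by omega
  set G := lexProd (_root_.starGraph (n - 1)) (pathGraph 3) with hG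
  set S0 : Set (Option (Fin (n - 1)) × Fin 3) :=
    {(some ⟨0,h0⟩, 0), (some ⟨1,h1⟩, 0), (some ⟨2,h2⟩, 0)} with hS0
  have hS0card : S0.ncard = 3 := by
    apply Set.ncard_eq_three.mpr
    refine ⟨_, _, _, ?_, ?_, ?_, rfl⟩ <;> simp [Prod.ext_iff, Fin.ext_iff]
  have hmem3 : ∀ S : Set (Option (Fin (n - 1)) × Fin 3), S.ncard = 3 →
      3 ∈ {k | ∃ f : Fin k → G.Subgraph, (∀ i, IsSteinerTree G S (f i)) ∧
        ∀ i j, i ≠ j → IntDisjoint S (f i) (f j)} :=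
    fun S hS => lower3 hm S hS
  have hconn0 : steinerConn G S0 = 3 := by
    unfold steinerConn
    apply IsGreatest.csSup_eq
    constructor
    · exact hmem3 S0 hS0card
    · intro k hk
      exact upper3 h0 h1 h2 k hk
  unfold genConn
  apply le_antisymm
  · exact Nat.sInf_le ⟨S0, hS0card, hconn0⟩
  · have hne : {c | ∃ S : Set (Option (Fin (n - 1)) × Fin 3),
        S.ncard = 3 ∧ steinerConn G S = c}.Nonempty := ⟨3, S0, hS0card, hconn0⟩
    apply le_csInf hne
    rintro c ⟨S, hS, rfl⟩
    have hS2 : ∃ x y, x ∈ S ∧ y ∈ S ∧ x ≠ y := by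
      obtain ⟨x, y, z, hxy, hxz, hyz, rfl⟩ := Set.ncard_eq_three.mp hS
      exact ⟨x, y, by simp, by simp, hxy⟩
    have hbdd : BddAbove {k | ∃ f : Fin k → G.Subgraph, (∀ i, IsSteinerTree G S (f i)) ∧
        ∀ i j, i ≠ j → IntDisjoint S (f i) (f j)} :=
      ⟨_, fun k hk => steiner_set_bdd S hS2 k hk⟩
    exact le_csSup hbdd (hmem3 S hS)
end
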